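/- arXiv:2110.02589 — 2 statements merged into one kernel-verified Lean document; each statement's English description precedes it below -/
import Mathlib

section
/- Every ball Banach function space Y on a space of homogeneous type coincides with its second associate space Y″: a measurable function f belongs to Y if and only if it belongs to Y″, and for such f, ‖f‖_Y = ‖f‖_{Y″}. -/
open MeasureTheory Set
open scoped ENNReal NNReal

/-- The ball in a quasi-metric space. -/
def qball {X : Type*} (ρ : X → X → ℝ) (c : X) (r : ℝ) : Set X := {y | ρ c y < r}

/-- The defining properties of a ball Banach function space on `(X, ρ, μ)`,
expressed for a norm functional `N` on (the moduli of) measurable functions. -/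
structure IsBallBanachFunctionSpace {X : Type*} [MeasurableSpace X] (μ : Measure X)
    (ρ : X → X → ℝ) (N : (X → ℝ≥0∞) → ℝ≥0∞) : Prop where
  zero_iff : ∀ f : X → ℝ≥0∞, Measurable f → (N f = 0 ↔ f =ᵐ[μ] 0)
  mono : ∀ f g : X → ℝ≥0∞, Measurable f → Measurable g →
    (∀ᵐ x ∂μ, g x ≤ f x) → N g ≤ N f
  sup_lim : ∀ (f : ℕ → X → ℝ≥0∞) (g : X → ℝ≥0∞), (∀ n, Measurable (f n)) →
    Measurable g → (∀ n, ∀ᵐ x ∂μ, f n x ≤ f (n + 1) x) →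
    (∀ᵐ x ∂μ, (⨆ n, f n x) = g x) → (⨆ n, N (f n)) = N g
  triangle : ∀ f g : X → ℝ≥0∞, Measurable f → Measurable g →
    N (fun x => f x + g x) ≤ N f + N g
  smul : ∀ (c : ℝ≥0) (f : X → ℝ≥0∞), Measurable f →
    N (fun x => (c : ℝ≥0∞) * f x) = c * N f
  ball_lt : ∀ (c : X) (r : ℝ), 0 < r →
    N (Set.indicator (qball ρ c r) fun _ => (1 : ℝ≥0∞)) < ∞
  local_int : ∀ (c : X) (r : ℝ), 0 < r → ∃ C : ℝ≥0∞, C < ∞ ∧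
    ∀ f : X → ℝ≥0∞, Measurable f → (∫⁻ x in qball ρ c r, f x ∂μ) ≤ C * N f

/-- The associate (Köthe dual) norm `‖g‖_{Y'} = sup {‖fg‖_{L¹} : ‖f‖_Y ≤ 1}`. -/
noncomputable def assocNorm {X : Type*} [MeasurableSpace X] (μ : Measure X)
    (N : (X → ℝ≥0∞) → ℝ≥0∞) (g : X → ℝ≥0∞) : ℝ≥0∞ :=
  ⨆ (f : X → ℝ≥0∞) (_ : Measurable f) (_ : N f ≤ 1), ∫⁻ x, f x * g x ∂μ

section Aux

variable {X : Type*} [MeasurableSpace X] {μ : Measure X} {ρ : X → X → ℝ}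
  {N : (X → ℝ≥0∞) → ℝ≥0∞}

lemma le_assocNorm {f g : X → ℝ≥0∞} (hf : Measurable f) (h1 : N f ≤ 1) :
    ∫⁻ x, f x * g x ∂μ ≤ assocNorm μ N g :=
  le_iSup_of_le f (le_iSup_of_le hf (le_iSup_of_le h1 le_rfl))

lemma iSup_min_nat (a : ℝ≥0∞) : ⨆ n : ℕ, min a n = a := by
  refine le_antisymm (iSup_le fun n => min_le_left _ _) ?_
  rcases eq_or_ne a ∞ with rfl | h
  · have : ∀ n : ℕ, min (∞ : ℝ≥0∞) n = n := fun n => min_eq_right le_top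
    simp only [this]
    exact le_of_eq ENNReal.iSup_natCast.symm
  · obtain ⟨n, hn⟩ := ENNReal.exists_nat_gt h
    exact le_iSup_of_le n (by rw [min_eq_left hn.le])

lemma easy_dir (hN : IsBallBanachFunctionSpace μ ρ N) {f : X → ℝ≥0∞} (hf : Measurable f) :
    assocNorm μ (assocNorm μ N) f ≤ N f := by
  refine iSup_le fun g => iSup_le fun hg => iSup_le fun hg1 => ?_
  rcases eq_or_ne (N f) ∞ with htop | htop
  · simp [htop]
  refine ENNReal.le_of_forall_pos_le_add fun ε hε _ => ?_
  set c : ℝ≥0 := (N f).toNNReal + ε with hc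
  have hc0 : c ≠ 0 := by positivity
  have hcle : N f ≤ (c : ℝ≥0∞) := by
    rw [hc, ENNReal.coe_add]
    exact le_trans (le_of_eq (ENNReal.coe_toNNReal htop).symm) le_self_add
  have hle1 : N (fun x => ((c⁻¹ : ℝ≥0) : ℝ≥0∞) * f x) ≤ 1 := by
    rw [hN.smul c⁻¹ f hf]
    calc ((c⁻¹ : ℝ≥0) : ℝ≥0∞) * N f ≤ ((c⁻¹ : ℝ≥0) : ℝ≥0∞) * c := mul_le_mul_right hcle _
    _ = ((c⁻¹ * c : ℝ≥0) : ℝ≥0∞) := by rw [ENNReal.coe_mul]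
    _ = 1 := by rw [inv_mul_cancel₀ hc0]; rfl
  have key : ∫⁻ x, ((c⁻¹ : ℝ≥0) : ℝ≥0∞) * f x * g x ∂μ ≤ 1 :=
    le_trans (le_assocNorm (hf.const_mul _) hle1) hg1
  have hrw : ∀ x, g x * f x = (c : ℝ≥0∞) * (((c⁻¹ : ℝ≥0) : ℝ≥0∞) * f x * g x) := by
    intro x
    rw [← mul_assoc, ← mul_assoc, ← ENNReal.coe_mul, mul_inv_cancel₀ hc0]
    simp [mul_comm]
  calc ∫⁻ x, g x * f x ∂μ
      = ∫⁻ x, (c : ℝ≥0∞) * (((c⁻¹ : ℝ≥0) : ℝ≥0∞) * f x * g x) ∂μ := by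
        exact lintegral_congr hrw
    _ = (c : ℝ≥0∞) * ∫⁻ x, ((c⁻¹ : ℝ≥0) : ℝ≥0∞) * f x * g x ∂μ :=
        lintegral_const_mul _ ((hf.const_mul _).mul hg)
    _ ≤ (c : ℝ≥0∞) * 1 := mul_le_mul_right key _
    _ = (c : ℝ≥0∞) := mul_one _
    _ ≤ N f + ε := by
        rw [hc, ENNReal.coe_add, ENNReal.coe_toNNReal htop]

end Aux
set_option synthInstance.maxHeartbeats 1000000
set_option maxHeartbeats 2000000

section Core

variable {X : Type*} [MeasurableSpace X] {μ : Measure X} {ρ : X → X → ℝ}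
  {N : (X → ℝ≥0∞) → ℝ≥0∞}

lemma core_sep (hN : IsBallBanachFunctionSpace μ ρ N)
    {E : Set X} (hE : MeasurableSet E) (hEfin : μ E ≠ ∞)
    {CE : ℝ≥0∞} (hCE : CE ≠ ∞)
    (hint : ∀ h : X → ℝ≥0∞, Measurable h → ∫⁻ x in E, h x ∂μ ≤ CE * N h)
    {u : X → ℝ≥0∞} (hu : Measurable u) {M₀ : ℝ≥0} (hub : ∀ x, u x ≤ M₀)
    (hsupp : ∀ x, x ∉ E → u x = 0) (hNu : 1 < N u) :
    ∃ g : X → ℝ≥0∞, Measurable g ∧ assocNorm μ N g ≤ 1 ∧ 1 < ∫⁻ x, u x * g x ∂μ := by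
  classical
  set ν := μ.restrict E with hν
  haveI : IsFiniteMeasure ν := ⟨by rw [hν, Measure.restrict_apply_univ]; exact hEfin.lt_top⟩
  have hufin : ∀ x, u x ≠ ∞ := fun x => ne_top_of_le_ne_top ENNReal.coe_ne_top (hub x)
  -- members of the unit ball are a.e. finite on E
  have hintfin : ∀ h : X → ℝ≥0∞, Measurable h → N h ≤ 1 → ∫⁻ x, h x ∂ν ≠ ∞ := by
    intro h hh h1
    refine ne_of_lt (lt_of_le_of_lt (le_trans (hint h hh) (mul_le_mul_right h1 _)) ?_)
    rw [mul_one]; exact hCE.lt_top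
  have hfinae : ∀ h : X → ℝ≥0∞, Measurable h → N h ≤ 1 → (∀ᵐ x ∂ν, h x < ∞) :=
    fun h hh h1 => ae_lt_top hh (hintfin h hh h1)
  set tr : (X → ℝ≥0∞) → X → ℝ := fun h x => (h x).toReal with htr
  have htrm : ∀ h : X → ℝ≥0∞, Measurable h → Measurable (tr h) :=
    fun h hh => hh.ennreal_toReal
  have hmemL1 : ∀ h : X → ℝ≥0∞, Measurable h → N h ≤ 1 → MemLp (tr h) 1 ν := by
    intro h hh h1
    rw [memLp_one_iff_integrable]
    exact integrable_toReal_of_lintegral_ne_top hh.aemeasurable (hintfin h hh h1)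
  -- the image of the unit ball in L¹(E)
  set D : Set (Lp ℝ 1 ν) :=
    {v | ∃ h : X → ℝ≥0∞, Measurable h ∧ N h ≤ 1 ∧ (∀ x, x ∉ E → h x = 0) ∧ ⇑v =ᵐ[ν] tr h}
    with hD
  have hDconv : Convex ℝ D := by
    rintro v₁ ⟨h₁, hm₁, hN₁, hs₁, he₁⟩ v₂ ⟨h₂, hm₂, hN₂, hs₂, he₂⟩ a b ha hb hab
    refine ⟨fun x => (a.toNNReal : ℝ≥0∞) * h₁ x + (b.toNNReal : ℝ≥0∞) * h₂ x,
      (hm₁.const_mul _).add (hm₂.const_mul _), ?_, ?_, ?_⟩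
    · refine le_trans (hN.triangle _ _ (hm₁.const_mul _) (hm₂.const_mul _)) ?_
      rw [hN.smul _ _ hm₁, hN.smul _ _ hm₂]
      calc (a.toNNReal : ℝ≥0∞) * N h₁ + (b.toNNReal : ℝ≥0∞) * N h₂
          ≤ (a.toNNReal : ℝ≥0∞) * 1 + (b.toNNReal : ℝ≥0∞) * 1 :=
            add_le_add (mul_le_mul_right hN₁ _) (mul_le_mul_right hN₂ _)
        _ = ((a.toNNReal + b.toNNReal : ℝ≥0) : ℝ≥0∞) := by
            rw [mul_one, mul_one, ENNReal.coe_add]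
        _ = 1 := by
            rw [← Real.toNNReal_add ha hb, hab, Real.toNNReal_one, ENNReal.coe_one]
    · intro x hx
      show (a.toNNReal : ℝ≥0∞) * h₁ x + (b.toNNReal : ℝ≥0∞) * h₂ x = 0
      rw [hs₁ x hx, hs₂ x hx, mul_zero, mul_zero, add_zero]
    · have hf₁ := hfinae h₁ hm₁ hN₁
      have hf₂ := hfinae h₂ hm₂ hN₂
      filter_upwards [Lp.coeFn_add (a • v₁) (b • v₂), Lp.coeFn_smul a v₁, Lp.coeFn_smul b v₂,
        he₁, he₂, hf₁, hf₂] with x hx1 hx2 hx3 hx4 hx5 hx6 hx7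
      rw [hx1, Pi.add_apply, hx2, hx3, Pi.smul_apply, Pi.smul_apply, smul_eq_mul, smul_eq_mul,
        hx4, hx5]
      have e₁ : (a.toNNReal : ℝ≥0∞) * h₁ x ≠ ∞ := ENNReal.mul_ne_top ENNReal.coe_ne_top hx6.ne
      have e₂ : (b.toNNReal : ℝ≥0∞) * h₂ x ≠ ∞ := ENNReal.mul_ne_top ENNReal.coe_ne_top hx7.ne
      simp only [htr]
      rw [ENNReal.toReal_add e₁ e₂, ENNReal.toReal_mul, ENNReal.toReal_mul,
        ENNReal.coe_toReal, ENNReal.coe_toReal, Real.coe_toNNReal a ha, Real.coe_toNNReal b hb]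
  -- u in L¹ and L²
  have huM2 : MemLp (tr u) 2 ν := by
    refine MemLp.of_bound (htrm u hu).aestronglyMeasurable (M₀ : ℝ)
      (Filter.Eventually.of_forall fun x => ?_)
    rw [Real.norm_eq_abs, abs_of_nonneg ENNReal.toReal_nonneg]
    exact le_trans (ENNReal.toReal_mono ENNReal.coe_ne_top (hub x)) (by simp)
  have huM1 : MemLp (tr u) 1 ν := huM2.mono_exponent one_le_two
  set uL : Lp ℝ 1 ν := huM1.toLp (tr u) with huL
  -- u is not in the closure of D
  haveI : FrechetUrysohnSpace (Lp ℝ 1 ν) :=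
    FirstCountableTopology.frechetUrysohnSpace
  have hunotin : uL ∉ closure D := by
    intro hmem
    obtain ⟨v, hvD, hvten⟩ := mem_closure_iff_seq_limit.1 hmem
    choose h hhm hhN hhs hhe using hvD
    obtain ⟨ns, _, hae⟩ := (tendstoInMeasure_of_tendsto_Lp hvten).exists_seq_tendsto_ae
    have haefin : ∀ᵐ x ∂ν, ∀ k, h k x < ∞ := ae_all_iff.2 fun k => hfinae (h k) (hhm k) (hhN k)
    have haeeq : ∀ᵐ x ∂ν, ∀ k, (v k : X → ℝ) x = tr (h k) x := ae_all_iff.2 hhe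
    have key : ∀ᵐ x ∂ν, Filter.Tendsto (fun i => h (ns i) x) Filter.atTop (nhds (u x)) := by
      filter_upwards [hae, haefin, haeeq, huM1.coeFn_toLp] with x hx1 hx2 hx3 hx4
      have ht : Filter.Tendsto (fun i => tr (h (ns i)) x) Filter.atTop (nhds ((u x).toReal)) := by
        have : (fun i => (v (ns i) : X → ℝ) x) = fun i => tr (h (ns i)) x :=
          funext fun i => hx3 (ns i)
        rw [← this]
        have : (uL : X → ℝ) x = (u x).toReal := hx4
        rw [← this]
        exact hx1
      have := (ENNReal.continuous_ofReal.tendsto _).comp ht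
      have e1 : (fun i => ENNReal.ofReal (tr (h (ns i)) x)) = fun i => h (ns i) x :=
        funext fun i => ENNReal.ofReal_toReal (hx2 (ns i)).ne
      have e2 : ENNReal.ofReal ((u x).toReal) = u x := ENNReal.ofReal_toReal (hufin x)
      rw [Function.comp_def, e1, e2] at this
      exact this
    set p : ℕ → X → ℝ≥0∞ := fun j x => ⨅ i : ℕ, h (ns (i + j)) x with hp
    have hpm : ∀ j, Measurable (p j) := fun j => Measurable.iInf fun i => hhm _
    have hpmono : ∀ j x, p j x ≤ p (j + 1) x := by
      intro j x
      refine le_iInf fun i => ?_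
      have hidx : i + 1 + j = i + (j + 1) := by omega
      exact iInf_le_of_le (i + 1) (le_of_eq (by rw [hidx]))
    have hplim : ∀ᵐ x ∂μ, (⨆ j, p j x) = u x := by
      have hon : ∀ᵐ x ∂ν, (⨆ j, p j x) = u x := by
        filter_upwards [key] with x hx
        have l1 : Filter.liminf (fun i => h (ns i) x) Filter.atTop = u x := hx.liminf_eq
        rw [Filter.liminf_eq_iSup_iInf_of_nat'] at l1
        exact l1
      rw [hν, ae_restrict_iff' hE] at hon
      filter_upwards [hon] with x hx
      by_cases hxE : x ∈ E
      · exact hx hxE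
      · have hz : ∀ j, p j x = 0 := fun j =>
          le_antisymm (iInf_le_of_le 0 (le_of_eq (hhs _ x hxE))) (zero_le)
        simp [hz, hsupp x hxE]
    have hsup := hN.sup_lim p u hpm hu
      (fun j => Filter.Eventually.of_forall (hpmono j)) hplim
    have hle1 : N u ≤ 1 := by
      rw [← hsup]
      refine iSup_le fun j => ?_
      exact le_trans (hN.mono (h (ns (0 + j))) (p j) (hhm _) (hpm j)
        (Filter.Eventually.of_forall fun x => iInf_le _ 0)) (hhN _)
    exact absurd hle1 (not_le.2 hNu)
  -- separation
  obtain ⟨φ, r, hφD, hφu⟩ :=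
    geometric_hahn_banach_closed_point (hDconv.closure) isClosed_closure hunotin
  have h0D : (0 : Lp ℝ 1 ν) ∈ D := by
    refine ⟨fun _ => 0, measurable_const, ?_, fun x _ => rfl, ?_⟩
    · have hz : N (fun _ : X => (0 : ℝ≥0∞)) = 0 :=
        (hN.zero_iff (fun _ => (0 : ℝ≥0∞)) measurable_const).2
          (Filter.Eventually.of_forall fun _ => rfl)
      exact hz.trans_le zero_le_one
    · filter_upwards [Lp.coeFn_zero ℝ 1 ν] with x hx
      rw [hx]; simp [htr]
  have hr0 : (0 : ℝ) < r := by
    have := hφD 0 (subset_closure h0D)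
    simpa using this
  -- inclusion L² → L¹ as a continuous linear map, and the Riesz representation
  have hT : ∀ w : Lp ℝ 2 ν, MemLp (⇑w) 1 ν :=
    fun w => (Lp.memLp w).mono_exponent one_le_two
  set T : Lp ℝ 2 ν → Lp ℝ 1 ν := fun w => (hT w).toLp ⇑w with hTdef
  have hTcoe : ∀ w, ⇑(T w) =ᵐ[ν] ⇑w := fun w => (hT w).coeFn_toLp
  set Creal : ℝ := ((ν Set.univ) ^ (1 - 1/(2:ℝ≥0∞).toReal)).toReal with hCreal
  have hTnorm : ∀ w, ‖T w‖ ≤ Creal * ‖w‖ := by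
    intro w
    rw [hTdef, Lp.norm_toLp]
    have hle := eLpNorm_le_eLpNorm_mul_rpow_measure_univ (μ := ν) (f := ⇑w)
      one_le_two (Lp.aestronglyMeasurable w)
    have hfin1 : eLpNorm (⇑w) 2 ν ≠ ∞ := (Lp.eLpNorm_lt_top w).ne
    have hfin2 : (ν Set.univ) ^ (1 - 1/(2:ℝ≥0∞).toReal) ≠ ∞ := by
      refine (ENNReal.rpow_lt_top_of_nonneg (by norm_num) (measure_ne_top ν _)).ne
    calc (eLpNorm (⇑w) 1 ν).toReal
        ≤ ((eLpNorm (⇑w) 2 ν) * (ν Set.univ) ^ (1/(1:ℝ≥0∞).toReal - 1/(2:ℝ≥0∞).toReal)).toReal := by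
          refine ENNReal.toReal_mono (ENNReal.mul_ne_top hfin1 (by simpa using hfin2)) ?_
          simpa using hle
      _ = Creal * ‖w‖ := by
          rw [ENNReal.toReal_mul, hCreal, Lp.norm_def]
          simp only [ENNReal.toReal_one, one_div_one]
          ring
  have hTadd : ∀ w₁ w₂, T (w₁ + w₂) = T w₁ + T w₂ := by
    intro w₁ w₂
    refine Lp.ext ?_
    filter_upwards [hTcoe (w₁ + w₂), hTcoe w₁, hTcoe w₂, Lp.coeFn_add w₁ w₂,
      Lp.coeFn_add (T w₁) (T w₂)] with x a b c d e
    rw [a, d, e, Pi.add_apply, Pi.add_apply, b, c]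
  have hTsmul : ∀ (a : ℝ) (w : Lp ℝ 2 ν), T (a • w) = a • T w := by
    intro a w
    refine Lp.ext ?_
    filter_upwards [hTcoe (a • w), hTcoe w, Lp.coeFn_smul a w, Lp.coeFn_smul a (T w)]
      with x h1 h2 h3 h4
    rw [h1, h3, h4, Pi.smul_apply, Pi.smul_apply, h2]
  set ψlin : Lp ℝ 2 ν →ₗ[ℝ] ℝ :=
    { toFun := fun w => φ (T w)
      map_add' := fun w₁ w₂ => by
        show φ (T (w₁ + w₂)) = φ (T w₁) + φ (T w₂)
        rw [hTadd, map_add]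
      map_smul' := fun a w => by
        show φ (T (a • w)) = a * φ (T w)
        rw [hTsmul, _root_.map_smul]; rfl } with hψlin
  have hψbound : ∀ w, ‖ψlin w‖ ≤ (‖φ‖ * Creal) * ‖w‖ := by
    intro w
    calc ‖φ (T w)‖ ≤ ‖φ‖ * ‖T w‖ := φ.le_opNorm _
      _ ≤ ‖φ‖ * (Creal * ‖w‖) :=
          mul_le_mul_of_nonneg_left (hTnorm w) (norm_nonneg φ)
      _ = (‖φ‖ * Creal) * ‖w‖ := by ring
  set ψ : Lp ℝ 2 ν →L[ℝ] ℝ := LinearMap.mkContinuous ψlin _ hψbound with hψ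
  set g₂ : Lp ℝ 2 ν := (InnerProductSpace.toDual ℝ _).symm ψ with hg₂def
  have hg₂ : ∀ w : Lp ℝ 2 ν, (inner ℝ g₂ w : ℝ) = φ (T w) := by
    intro w
    rw [hg₂def, InnerProductSpace.toDual_symm_apply]
    rfl
  -- measurable representative
  have hg₂am := (Lp.aestronglyMeasurable g₂).aemeasurable
  set gt : X → ℝ := hg₂am.mk _ with hgt
  have hgtm : Measurable gt := hg₂am.measurable_mk
  have hgteq : ⇑g₂ =ᵐ[ν] gt := hg₂am.ae_eq_mk
  have hgtint : Integrable gt ν :=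
    (memLp_one_iff_integrable.1 ((Lp.memLp g₂).mono_exponent one_le_two)).congr hgteq
  have hOgfin : ∫⁻ x, ENNReal.ofReal (gt x) ∂ν ≠ ∞ := by
    refine ne_of_lt (lt_of_le_of_lt (lintegral_mono fun x => ?_) hgtint.2)
    rw [Real.enorm_eq_ofReal_abs]
    exact ENNReal.ofReal_le_ofReal (le_abs_self _)
  set G : X → ℝ≥0∞ := E.indicator fun y => ENNReal.ofReal (gt y) with hG
  have hGm : Measurable G := (hgtm.ennreal_ofReal).indicator hE
  -- F1 : upper bound on ∫ h G for all h in the unit ball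
  have F1 : ∀ h : X → ℝ≥0∞, Measurable h → N h ≤ 1 →
      ∫⁻ x, h x * G x ∂μ ≤ ENNReal.ofReal r := by
    intro h hh h1
    set P : Set X := {x | 0 < gt x} with hP
    have hPm : MeasurableSet P := measurableSet_lt measurable_const hgtm
    set q : ℕ → X → ℝ≥0∞ := fun M => (E ∩ P).indicator fun y => min (h y) M with hq
    have hqm : ∀ M, Measurable (q M) :=
      fun M => (hh.min measurable_const).indicator (hE.inter hPm)
    have hqle : ∀ M x, q M x ≤ h x := by
      intro M x
      by_cases hx : x ∈ E ∩ P
      · rw [hq]; simp only [indicator_of_mem hx]; exact min_le_left _ _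
      · rw [hq]; simp only [indicator_of_notMem hx]; exact zero_le
    have hqN : ∀ M, N (q M) ≤ 1 :=
      fun M => le_trans (hN.mono h (q M) hh (hqm M) (Filter.Eventually.of_forall (hqle M))) h1
    have hqbd : ∀ M x, q M x ≤ (M : ℝ≥0∞) := by
      intro M x
      by_cases hx : x ∈ E ∩ P
      · rw [hq]; simp only [indicator_of_mem hx]; exact min_le_right _ _
      · rw [hq]; simp only [indicator_of_notMem hx]; exact zero_le
    have hqfin : ∀ M x, q M x ≠ ∞ :=
      fun M x => ne_top_of_le_ne_top (ENNReal.natCast_ne_top M) (hqbd M x)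
    have step : ∀ M : ℕ, ∫⁻ x, q M x * ENNReal.ofReal (gt x) ∂ν ≤ ENNReal.ofReal r := by
      intro M
      have hv2 : MemLp (tr (q M)) 2 ν := by
        refine MemLp.of_bound (htrm _ (hqm M)).aestronglyMeasurable (M : ℝ)
          (Filter.Eventually.of_forall fun x => ?_)
        rw [Real.norm_eq_abs, abs_of_nonneg ENNReal.toReal_nonneg]
        exact le_trans (ENNReal.toReal_mono (ENNReal.natCast_ne_top M) (hqbd M x)) (by simp)
      set w : Lp ℝ 2 ν := hv2.toLp _ with hw
      have hTwD : T w ∈ D := by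
        refine ⟨q M, hqm M, hqN M, ?_, ?_⟩
        · intro x hx
          rw [hq]; exact indicator_of_notMem (fun hxx => hx hxx.1) _
        · filter_upwards [hTcoe w, hv2.coeFn_toLp] with x a b
          rw [a, b]
      have hlt : φ (T w) < r := hφD _ (subset_closure hTwD)
      have hinner : (inner ℝ g₂ w : ℝ) = ∫ x, gt x * tr (q M) x ∂ν := by
        rw [MeasureTheory.L2.inner_def]
        refine integral_congr_ae ?_
        filter_upwards [hgteq, hv2.coeFn_toLp] with x e1 e2
        rw [e1, e2]
        simp [RCLike.inner_apply, starRingEnd_apply, mul_comm]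
      have hnn : 0 ≤ᵐ[ν] fun x => gt x * tr (q M) x := by
        refine Filter.Eventually.of_forall fun x => ?_
        by_cases hx : x ∈ E ∩ P
        · exact mul_nonneg (le_of_lt hx.2) ENNReal.toReal_nonneg
        · have h0 : q M x = 0 := indicator_of_notMem hx _
          simp [htr, h0]
      have heqlint : ∫ x, gt x * tr (q M) x ∂ν
          = (∫⁻ x, ENNReal.ofReal (gt x * tr (q M) x) ∂ν).toReal :=
        integral_eq_lintegral_of_nonneg_ae hnn
          (hgtm.mul (htrm _ (hqm M))).aestronglyMeasurable
      have hofeq : ∀ x, ENNReal.ofReal (gt x * tr (q M) x) = q M x * ENNReal.ofReal (gt x) := by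
        intro x
        by_cases hx : x ∈ E ∩ P
        · have hgt0 : 0 ≤ gt x := le_of_lt hx.2
          rw [ENNReal.ofReal_mul hgt0, ENNReal.ofReal_toReal (hqfin M x), mul_comm]
        · have h0 : q M x = 0 := indicator_of_notMem hx _
          simp [htr, h0]
      have hfin2 : ∫⁻ x, q M x * ENNReal.ofReal (gt x) ∂ν ≠ ∞ := by
        refine ne_of_lt (lt_of_le_of_lt (lintegral_mono fun x =>
          mul_le_mul_left (hqbd M x) _) ?_)
        rw [lintegral_const_mul _ (hgtm.ennreal_ofReal)]
        exact ENNReal.mul_lt_top (ENNReal.natCast_ne_top M).lt_top hOgfin.lt_top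
      have hkey : ∫⁻ x, q M x * ENNReal.ofReal (gt x) ∂ν = ENNReal.ofReal (φ (T w)) := by
        have e3 : φ (T w) = (∫⁻ x, q M x * ENNReal.ofReal (gt x) ∂ν).toReal := by
          rw [← hg₂ w, hinner, heqlint]
          congr 1
          exact lintegral_congr hofeq
        rw [e3, ENNReal.ofReal_toReal hfin2]
      rw [hkey]
      exact ENNReal.ofReal_le_ofReal hlt.le
    have hred : ∫⁻ x, h x * G x ∂μ = ∫⁻ x, h x * ENNReal.ofReal (gt x) ∂ν := by
      have hpt : ∀ x, h x * G x = E.indicator (fun y => h y * ENNReal.ofReal (gt y)) x := by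
        intro x
        by_cases hx : x ∈ E
        · rw [hG]; simp [indicator_of_mem hx]
        · rw [hG]; simp [indicator_of_notMem hx]
      rw [lintegral_congr hpt, lintegral_indicator hE]
    rw [hred]
    have hmeq : ∫⁻ x, h x * ENNReal.ofReal (gt x) ∂ν
        = ⨆ M : ℕ, ∫⁻ x, q M x * ENNReal.ofReal (gt x) ∂ν := by
      have hptae : ∀ᵐ x ∂ν,
          h x * ENNReal.ofReal (gt x) = ⨆ M : ℕ, q M x * ENNReal.ofReal (gt x) := by
        rw [hν, ae_restrict_iff' hE]
        refine Filter.Eventually.of_forall fun x hx => ?_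
        rcases le_or_gt (gt x) 0 with hle | hlt
        · rw [ENNReal.ofReal_of_nonpos hle]
          simp
        · have hxEP : x ∈ E ∩ P := ⟨hx, hlt⟩
          have hmin : ∀ M : ℕ, q M x = min (h x) M := fun M => indicator_of_mem hxEP _
          simp only [hmin]
          calc h x * ENNReal.ofReal (gt x)
              = (⨆ M : ℕ, min (h x) (M : ℝ≥0∞)) * ENNReal.ofReal (gt x) := by
                rw [iSup_min_nat]
            _ = ⨆ M : ℕ, min (h x) (M : ℝ≥0∞) * ENNReal.ofReal (gt x) :=
                ENNReal.iSup_mul _ _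
      have hmono : Monotone fun M : ℕ => fun x => q M x * ENNReal.ofReal (gt x) := by
        intro M M' hMM' x
        refine mul_le_mul_left ?_ _
        by_cases hx : x ∈ E ∩ P
        · rw [hq]; simp only [indicator_of_mem hx]
          exact min_le_min le_rfl (by exact_mod_cast Nat.cast_le.2 hMM')
        · rw [hq]; simp only [indicator_of_notMem hx]; exact zero_le
      rw [lintegral_congr_ae hptae]
      exact lintegral_iSup (fun M => (hqm M).mul (hgtm.ennreal_ofReal)) hmono
    rw [hmeq]
    exact iSup_le step
  -- F2 : lower bound on ∫ u G
  set wu : Lp ℝ 2 ν := huM2.toLp _ with hwu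
  have hTu : T wu = uL := by
    refine Lp.ext ?_
    filter_upwards [hTcoe wu, huM2.coeFn_toLp, huM1.coeFn_toLp] with x a b c
    rw [a, b, c]
  have hIdef : ∫⁻ x, u x * G x ∂μ = ∫⁻ x, u x * ENNReal.ofReal (gt x) ∂ν := by
    have hpt : ∀ x, u x * G x = E.indicator (fun y => u y * ENNReal.ofReal (gt y)) x := by
      intro x
      by_cases hx : x ∈ E
      · rw [hG]; simp [indicator_of_mem hx]
      · rw [hG]; simp [indicator_of_notMem hx, hsupp x hx]
    rw [lintegral_congr hpt, lintegral_indicator hE]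
  have hIfin : ∫⁻ x, u x * ENNReal.ofReal (gt x) ∂ν ≠ ∞ := by
    refine ne_of_lt (lt_of_le_of_lt (lintegral_mono fun x =>
      mul_le_mul_left (hub x) _) ?_)
    rw [lintegral_const_mul _ (hgtm.ennreal_ofReal)]
    exact ENNReal.mul_lt_top ENNReal.coe_ne_top.lt_top hOgfin.lt_top
  have hbdd : ∃ C, ∀ x, ‖tr u x‖ ≤ C := by
    refine ⟨(M₀ : ℝ), fun x => ?_⟩
    rw [Real.norm_eq_abs, abs_of_nonneg ENNReal.toReal_nonneg]
    exact le_trans (ENNReal.toReal_mono ENNReal.coe_ne_top (hub x)) (by simp)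
  have hphile : φ uL ≤ (∫⁻ x, u x * ENNReal.ofReal (gt x) ∂ν).toReal := by
    rw [← hTu, ← hg₂ wu, MeasureTheory.L2.inner_def]
    have e1 : ∫ x, (inner ℝ ((g₂ : Lp ℝ 2 ν) x) ((wu : Lp ℝ 2 ν) x) : ℝ) ∂ν
        = ∫ x, gt x * tr u x ∂ν := by
      refine integral_congr_ae ?_
      filter_upwards [hgteq, huM2.coeFn_toLp] with x a b
      rw [a, b]
      simp [RCLike.inner_apply, starRingEnd_apply, mul_comm]
    rw [e1]
    have hint1 : Integrable (fun x => tr u x * gt x) ν :=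
      hgtint.bdd_mul (htrm u hu).aestronglyMeasurable (Filter.Eventually.of_forall hbdd.choose_spec)
    have hint1' : Integrable (fun x => gt x * tr u x) ν := by
      simpa [mul_comm] using hint1
    have hint2 : Integrable (fun x => max (gt x) 0 * tr u x) ν := by
      have := (hgtint.pos_part).bdd_mul (htrm u hu).aestronglyMeasurable (Filter.Eventually.of_forall hbdd.choose_spec)
      simpa [mul_comm] using this
    have hmono2 : ∫ x, gt x * tr u x ∂ν ≤ ∫ x, max (gt x) 0 * tr u x ∂ν :=
      integral_mono hint1' hint2 (fun x =>
        mul_le_mul_of_nonneg_right (le_max_left _ _) ENNReal.toReal_nonneg)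
    refine le_trans hmono2 ?_
    have hnn2 : 0 ≤ᵐ[ν] fun x => max (gt x) 0 * tr u x :=
      Filter.Eventually.of_forall fun x =>
        mul_nonneg (le_max_right _ _) ENNReal.toReal_nonneg
    rw [integral_eq_lintegral_of_nonneg_ae hnn2
      ((hgtm.max measurable_const).mul (htrm u hu)).aestronglyMeasurable]
    refine ENNReal.toReal_mono hIfin (le_of_eq (lintegral_congr fun x => ?_))
    rcases le_or_gt (gt x) 0 with hle | hlt
    · simp [max_eq_right hle, ENNReal.ofReal_of_nonpos hle]
    · rw [max_eq_left hlt.le, ENNReal.ofReal_mul hlt.le,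
        ENNReal.ofReal_toReal (hufin x), mul_comm]
  have hIG : ENNReal.ofReal r < ∫⁻ x, u x * G x ∂μ := by
    rw [hIdef, ← ENNReal.ofReal_toReal hIfin]
    exact (ENNReal.ofReal_lt_ofReal_iff_of_nonneg hr0.le).2 (lt_of_lt_of_le hφu hphile)
  -- F3 : conclusion
  set s' := assocNorm μ N G with hs'
  have hs'le : s' ≤ ENNReal.ofReal r := by
    rw [hs', assocNorm]
    exact iSup_le fun h => iSup_le fun hh => iSup_le fun h1 => F1 h hh h1
  have hs'fin : s' ≠ ∞ := ne_top_of_le_ne_top ENNReal.ofReal_ne_top hs'le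
  have hIGne : ∫⁻ x, u x * G x ∂μ ≠ 0 := (lt_of_le_of_lt (zero_le) hIG).ne'
  by_cases hs0 : s' = 0
  · refine ⟨fun x => ∞ * G x, hGm.const_mul ∞, ?_, ?_⟩
    · refine iSup_le fun h => iSup_le fun hh => iSup_le fun h1 => ?_
      have hz : ∫⁻ x, h x * G x ∂μ = 0 :=
        le_antisymm (le_trans (le_assocNorm hh h1) (le_of_eq hs0)) (zero_le)
      have hz' : (fun x => h x * G x) =ᵐ[μ] 0 := (lintegral_eq_zero_iff (hh.mul hGm)).1 hz
      have hz'' : (fun x => h x * (∞ * G x)) =ᵐ[μ] 0 := by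
        filter_upwards [hz'] with x hx
        have hx0 : h x * G x = 0 := hx
        rcases mul_eq_zero.1 hx0 with h0 | h0 <;> simp [h0]
      calc ∫⁻ x, h x * (∞ * G x) ∂μ = ∫⁻ _, (0 : ℝ≥0∞) ∂μ := lintegral_congr_ae hz''
        _ = 0 := lintegral_zero
        _ ≤ 1 := zero_le_one
    · have e : ∫⁻ x, u x * (∞ * G x) ∂μ = ∞ * ∫⁻ x, u x * G x ∂μ := by
        rw [← lintegral_const_mul (f := fun x => u x * G x) ∞ (hu.mul hGm)]
        refine lintegral_congr fun x => ?_; ring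
      rw [e, ENNReal.top_mul hIGne]
      exact ENNReal.one_lt_top
  · refine ⟨fun x => s'⁻¹ * G x, hGm.const_mul _, ?_, ?_⟩
    · refine iSup_le fun h => iSup_le fun hh => iSup_le fun h1 => ?_
      have e : ∫⁻ x, h x * (s'⁻¹ * G x) ∂μ = s'⁻¹ * ∫⁻ x, h x * G x ∂μ := by
        rw [← lintegral_const_mul (f := fun x => h x * G x) s'⁻¹ (hh.mul hGm)]
        refine lintegral_congr fun x => ?_; ring
      rw [e]
      calc s'⁻¹ * ∫⁻ x, h x * G x ∂μ ≤ s'⁻¹ * s' := mul_le_mul_right (le_assocNorm hh h1) _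
        _ = 1 := ENNReal.inv_mul_cancel hs0 hs'fin
    · have e : ∫⁻ x, u x * (s'⁻¹ * G x) ∂μ = s'⁻¹ * ∫⁻ x, u x * G x ∂μ := by
        rw [← lintegral_const_mul (f := fun x => u x * G x) s'⁻¹ (hu.mul hGm)]
        refine lintegral_congr fun x => ?_; ring
      rw [e]
      have h5 : s' < ∫⁻ x, u x * G x ∂μ := lt_of_le_of_lt hs'le hIG
      calc (1 : ℝ≥0∞) = s'⁻¹ * s' := (ENNReal.inv_mul_cancel hs0 hs'fin).symm
        _ < s'⁻¹ * ∫⁻ x, u x * G x ∂μ :=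
          (ENNReal.mul_lt_mul_iff_right (ENNReal.inv_ne_zero.2 hs'fin)
            (ENNReal.inv_ne_top.2 hs0)).2 h5

end Core
section Main

variable {X : Type*} [MeasurableSpace X] {μ : Measure X} {ρ : X → X → ℝ}
  {N : (X → ℝ≥0∞) → ℝ≥0∞}

lemma hard_dir (hN : IsBallBanachFunctionSpace μ ρ N)
    (hfin : ∀ (x : X) (r : ℝ), 0 < r → μ (qball ρ x r) < ∞)
    {f : X → ℝ≥0∞} (hf : Measurable f) :
    N f ≤ assocNorm μ (assocNorm μ N) f := by
  classical
  refine ENNReal.le_of_forall_nnreal_lt fun t ht => ?_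
  rcases eq_or_ne t 0 with rfl | ht0
  · simp
  rcases isEmpty_or_nonempty X with hX | hX
  · exfalso
    have hz : f =ᵐ[μ] 0 := Filter.Eventually.of_forall fun x => isEmptyElim x
    have h0 := (hN.zero_iff f hf).2 hz
    rw [h0] at ht
    exact absurd ht (by simp)
  obtain ⟨x₀⟩ := hX
  set B : ℕ → Set X := fun m => qball ρ x₀ (m + 1) with hB
  have hBfin : ∀ m : ℕ, μ (B m) ≠ ∞ := fun m => (hfin x₀ (m + 1) (by positivity)).ne
  set T : ℕ → Set X := fun m => toMeasurable μ (B m) with hT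
  have hTm : ∀ m, MeasurableSet (T m) := fun m => measurableSet_toMeasurable μ _
  have hTfin : ∀ m, μ (T m) ≠ ∞ := fun m => by
    simp only [hT]; rw [measure_toMeasurable]; exact hBfin m
  set K : ℕ → Set X := fun n => ⋃ m ∈ Finset.range (n + 1), T m with hK
  have hKm : ∀ n, MeasurableSet (K n) :=
    fun n => (Finset.range (n + 1)).measurableSet_biUnion fun m _ => hTm m
  have hKfin : ∀ n, μ (K n) ≠ ∞ := by
    intro n
    refine ne_of_lt (lt_of_le_of_lt (measure_biUnion_finset_le _ _) ?_)
    exact ENNReal.sum_lt_top.2 fun m _ => (hTfin m).lt_top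
  choose C hCfin hCle using fun m : ℕ => hN.local_int x₀ (m + 1) (by positivity)
  have hTint : ∀ m, ∀ h : X → ℝ≥0∞, Measurable h → ∫⁻ x in T m, h x ∂μ ≤ C m * N h := by
    intro m h hh
    simp only [hT]
    rw [Measure.restrict_toMeasurable (hBfin m)]
    exact hCle m h hh
  have hKint : ∀ n, ∀ h : X → ℝ≥0∞, Measurable h →
      ∫⁻ x in K n, h x ∂μ ≤ (∑ m ∈ Finset.range (n + 1), C m) * N h := by
    intro n h hh
    have hset : K n = ⋃ m : ℕ, (if m ≤ n then T m else ∅) := by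
      ext x
      simp only [hK, Set.mem_iUnion, Finset.mem_range, Nat.lt_succ_iff, Set.mem_iUnion]
      constructor
      · rintro ⟨m, hm, hx⟩; exact ⟨m, by rw [if_pos hm]; exact hx⟩
      · rintro ⟨m, hx⟩
        by_cases hm : m ≤ n
        · rw [if_pos hm] at hx; exact ⟨m, hm, hx⟩
        · rw [if_neg hm] at hx; exact absurd hx (Set.notMem_empty x)
    rw [hset]
    refine le_trans (lintegral_iUnion_le _ _) ?_
    have hz : ∀ m ∉ Finset.range (n + 1),
        ∫⁻ x in (if m ≤ n then T m else ∅), h x ∂μ = 0 := by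
      intro m hm
      have hmn : ¬ m ≤ n := by simpa [Finset.mem_range, Nat.lt_succ_iff] using hm
      simp [hmn]
    rw [tsum_eq_sum hz, Finset.sum_mul]
    refine Finset.sum_le_sum fun m hm => ?_
    have hmn : m ≤ n := by simpa [Finset.mem_range, Nat.lt_succ_iff] using hm
    rw [if_pos hmn]
    exact hTint m h hh
  set F : ℕ → X → ℝ≥0∞ := fun n => (K n).indicator (fun y => min (f y) n) with hF
  have hFm : ∀ n, Measurable (F n) := fun n => (hf.min measurable_const).indicator (hKm n)
  have hFle : ∀ n x, F n x ≤ f x := by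
    intro n x
    by_cases hx : x ∈ K n
    · rw [hF]; simp only [indicator_of_mem hx]; exact min_le_left _ _
    · rw [hF]; simp only [indicator_of_notMem hx]; exact zero_le
  have hFmono : ∀ n x, F n x ≤ F (n + 1) x := by
    intro n x
    by_cases hx : x ∈ K n
    · have hx' : x ∈ K (n + 1) := by
        revert hx
        simp only [hK, Set.mem_iUnion, Finset.mem_range, Nat.lt_succ_iff]
        rintro ⟨m, hm, hxm⟩
        exact ⟨m, by omega, hxm⟩
      rw [hF]; simp only [indicator_of_mem hx, indicator_of_mem hx']
      exact min_le_min le_rfl (by exact_mod_cast Nat.le_succ n)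
    · rw [hF]; simp only [indicator_of_notMem hx]; exact zero_le
  have hFsup : ∀ x, (⨆ n, F n x) = f x := by
    intro x
    have hm : x ∈ B ⌈ρ x₀ x⌉₊ := by
      rw [hB]
      show ρ x₀ x < (⌈ρ x₀ x⌉₊ : ℝ) + 1
      exact lt_of_le_of_lt (Nat.le_ceil _) (lt_add_one _)
    set m := ⌈ρ x₀ x⌉₊ with hmdef
    have hxK : ∀ n, m ≤ n → x ∈ K n := by
      intro n hn
      rw [hK]
      refine Set.mem_biUnion ?_ (subset_toMeasurable μ _ hm)
      have hlt : m < n + 1 := by omega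
      exact Finset.mem_coe.2 (Finset.mem_range.2 hlt)
    refine le_antisymm (iSup_le fun n => le_trans (hFle n x) le_rfl) ?_
    rw [← iSup_min_nat (f x)]
    refine iSup_le fun n => ?_
    have h1 : min (f x) n ≤ F (max n m) x := by
      have hxK' : x ∈ K (max n m) := hxK _ (le_max_right _ _)
      rw [hF]; simp only [indicator_of_mem hxK']
      exact min_le_min le_rfl (by exact_mod_cast Nat.le_max_left n m)
    exact le_trans h1 (le_iSup (fun k => F k x) (max n m))
  have hNsup : (⨆ n, N (F n)) = N f :=
    hN.sup_lim F f hFm hf (fun n => Filter.Eventually.of_forall (hFmono n))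
      (Filter.Eventually.of_forall hFsup)
  have hex : ∃ n, (t : ℝ≥0∞) < N (F n) := by
    rw [← hNsup] at ht
    exact lt_iSup_iff.1 ht
  obtain ⟨n, hn⟩ := hex
  set u : X → ℝ≥0∞ := fun x => ((t⁻¹ : ℝ≥0) : ℝ≥0∞) * F n x with hu'
  have hum : Measurable u := (hFm n).const_mul _
  have huN : 1 < N u := by
    rw [hu', hN.smul t⁻¹ (F n) (hFm n)]
    have hcancel : ((t⁻¹ : ℝ≥0) : ℝ≥0∞) * (t : ℝ≥0∞) = 1 := by
      rw [← ENNReal.coe_mul, inv_mul_cancel₀ ht0, ENNReal.coe_one]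
    calc (1 : ℝ≥0∞) = ((t⁻¹ : ℝ≥0) : ℝ≥0∞) * t := hcancel.symm
      _ < ((t⁻¹ : ℝ≥0) : ℝ≥0∞) * N (F n) := by
        refine (ENNReal.mul_lt_mul_iff_right ?_ ?_).2 hn
        · simp [ht0]
        · exact ENNReal.coe_ne_top
  have hubd : ∀ x, u x ≤ ((t⁻¹ * n : ℝ≥0) : ℝ≥0∞) := by
    intro x
    rw [hu', ENNReal.coe_mul]
    refine mul_le_mul_right ?_ _
    by_cases hx : x ∈ K n
    · rw [hF]; simp only [indicator_of_mem hx]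
      exact le_trans (min_le_right _ _) (by simp)
    · rw [hF]; simp only [indicator_of_notMem hx]; exact zero_le
  have husupp : ∀ x, x ∉ K n → u x = 0 := by
    intro x hx
    rw [hu', hF]
    simp [indicator_of_notMem hx]
  obtain ⟨g, hgm, hg1, hgu⟩ := core_sep hN (hKm n) (hKfin n)
    (ENNReal.sum_lt_top.2 fun m _ => hCfin m).ne (hKint n) hum hubd husupp huN
  have hterm : ∫⁻ x, g x * f x ∂μ ≤ assocNorm μ (assocNorm μ N) f := le_assocNorm hgm hg1
  refine le_trans ?_ hterm
  have e1 : ∫⁻ x, F n x * g x ∂μ = (t : ℝ≥0∞) * ∫⁻ x, u x * g x ∂μ := by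
    rw [← lintegral_const_mul (f := fun x => u x * g x) _ (hum.mul hgm)]
    refine lintegral_congr fun x => ?_
    rw [hu', ← mul_assoc, ← mul_assoc, ← ENNReal.coe_mul, mul_inv_cancel₀ ht0]
    simp
  calc (t : ℝ≥0∞) = t * 1 := (mul_one _).symm
    _ ≤ (t : ℝ≥0∞) * ∫⁻ x, u x * g x ∂μ := mul_le_mul_right hgu.le _
    _ = ∫⁻ x, F n x * g x ∂μ := e1.symm
    _ ≤ ∫⁻ x, g x * f x ∂μ := by
      refine lintegral_mono fun x => ?_
      calc F n x * g x ≤ f x * g x := mul_le_mul_left (hFle n x) _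
        _ = g x * f x := mul_comm _ _

end Main

/-- Every ball Banach function space coincides with its second associate space,
with equality of norms (hence `f ∈ Y` iff `f ∈ Y''`). -/
theorem stmt10 {X : Type*} [MeasurableSpace X] (μ : Measure X) (ρ : X → X → ℝ)
    (A₀ : ℝ) (hA₀ : 1 ≤ A₀)
    (hρ_nonneg : ∀ x y, 0 ≤ ρ x y)
    (hρ_eq : ∀ x y, ρ x y = 0 ↔ x = y)
    (hρ_symm : ∀ x y, ρ x y = ρ y x)
    (hρ_tri : ∀ x y z, ρ x z ≤ A₀ * (ρ x y + ρ y z))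
    (hpos : ∀ (x : X) (r : ℝ), 0 < r → 0 < μ (qball ρ x r))
    (hfin : ∀ (x : X) (r : ℝ), 0 < r → μ (qball ρ x r) < ∞)
    (N : (X → ℝ≥0∞) → ℝ≥0∞)
    (hN : IsBallBanachFunctionSpace μ ρ N) :
    ∀ f : X → ℝ≥0∞, Measurable f →
      N f = assocNorm μ (assocNorm μ N) f ∧
      (N f < ∞ ↔ assocNorm μ (assocNorm μ N) f < ∞) := by
  intro f hf
  have heq : N f = assocNorm μ (assocNorm μ N) f :=
    le_antisymm (hard_dir hN hfin hf) (easy_dir hN hf)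
  exact ⟨heq, by rw [heq]⟩
end

section
/- Let (X, ρ, μ) be a space of homogeneous type, x₀ ∈ X, ε ∈ (0,1), and set w := [M(𝟏_{B(x₀,1)})]^ε, where M is the Hardy–Littlewood maximal operator. Then w is a Muckenhoupt A₁(X) weight: there exists C > 0 such that for every ball B ⊂ X and almost every x ∈ B, (1/μ(B)) ∫_B w(y) dμ(y) ≤ C w(x). -/
open MeasureTheory Set
open scoped ENNReal

namespace Stmt11Aux

variable {X : Type*} [MeasurableSpace X] (μ : Measure X)

/-- If `h ≤ c` on `s` (s possibly non-measurable), then `∫⁻ h ∂(μ.restrict s) ≤ c * μ s`. -/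
theorem lintegral_restrict_le (h : X → ℝ≥0∞) (s : Set X) (c : ℝ≥0∞)
    (hb : ∀ y ∈ s, h y ≤ c) : ∫⁻ y, h y ∂(μ.restrict s) ≤ c * μ s := by
  rw [MeasureTheory.lintegral]
  refine iSup₂_le fun φ hφ => ?_
  rw [SimpleFunc.lintegral]
  have key : ∀ y ∈ φ.range, y * (μ.restrict s) (φ ⁻¹' {y})
      ≤ c * (μ.restrict s) (φ ⁻¹' {y}) := by
    intro y _
    rcases eq_or_ne ((μ.restrict s) (φ ⁻¹' {y})) 0 with h0 | h0
    · simp [h0]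
    · rw [Measure.restrict_apply (φ.measurableSet_fiber y)] at h0
      obtain ⟨u, hu⟩ := nonempty_of_measure_ne_zero h0
      have hyc : y ≤ c := by
        have h1 : φ u = y := hu.1
        have h2 : φ u ≤ h u := hφ u
        rw [h1] at h2
        exact h2.trans (hb u hu.2)
      exact mul_le_mul_left hyc _
  calc ∑ y ∈ φ.range, y * (μ.restrict s) (φ ⁻¹' {y})
      ≤ ∑ y ∈ φ.range, c * (μ.restrict s) (φ ⁻¹' {y}) := Finset.sum_le_sum key
    _ = c * ∑ y ∈ φ.range, (μ.restrict s) (φ ⁻¹' {y}) := by rw [Finset.mul_sum]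
    _ = c * (μ.restrict s) univ := by rw [SimpleFunc.sum_range_measure_preimage_singleton]
    _ = c * μ s := by rw [Measure.restrict_apply_univ]

/-- If `h` is supported in `s`, then `∫⁻ h ∂μ = ∫⁻ h ∂(μ.restrict s)`. -/
theorem lintegral_restrict_of_support (h : X → ℝ≥0∞) (s : Set X)
    (hs : ∀ y, h y ≠ 0 → y ∈ s) :
    ∫⁻ y, h y ∂μ = ∫⁻ y, h y ∂(μ.restrict s) := by
  refine le_antisymm ?_ (lintegral_mono' Measure.restrict_le_self le_rfl)
  rw [MeasureTheory.lintegral, MeasureTheory.lintegral]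
  refine iSup₂_le fun φ hφ => le_iSup₂_of_le φ hφ ?_
  rw [SimpleFunc.lintegral, SimpleFunc.lintegral]
  refine Finset.sum_le_sum fun y _ => ?_
  rcases eq_or_ne y 0 with rfl | hy0
  · simp
  · have hsub : φ ⁻¹' {y} ⊆ s := by
      intro u hu
      refine hs u fun h0 => hy0 ?_
      have h2 : φ u ≤ h u := hφ u
      rw [h0] at h2
      have h3 : φ u = y := hu
      exact le_antisymm (h3 ▸ h2) (zero_le)
    rw [Measure.restrict_apply (φ.measurableSet_fiber y),
      Set.inter_eq_self_of_subset_left hsub]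

theorem inv_le_mul_inv {a b K : ℝ≥0∞} (ha : a ≠ 0) (ha' : a ≠ ∞) (hb : b ≠ 0) (hb' : b ≠ ∞)
    (h : a ≤ K * b) : b⁻¹ ≤ K * a⁻¹ := by
  calc b⁻¹ = a⁻¹ * a * b⁻¹ := by rw [ENNReal.inv_mul_cancel ha ha', one_mul]
    _ = a⁻¹ * (a * b⁻¹) := by rw [mul_assoc]
    _ ≤ a⁻¹ * (K * b * b⁻¹) := mul_le_mul_right (mul_le_mul_left h _) _
    _ = K * a⁻¹ := by
        rw [mul_assoc, ENNReal.mul_inv_cancel hb hb', mul_one, mul_comm]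

theorem ennreal_inv_mul_self_le_one (a : ℝ≥0∞) : a⁻¹ * a ≤ 1 := by
  rcases eq_or_ne a 0 with rfl | h0
  · simp
  rcases eq_or_ne a ∞ with rfl | h1
  · simp
  · rw [ENNReal.inv_mul_cancel h0 h1]

theorem real_key {a b Cm ε : ℝ} (ha : 0 < a) (hab : a ≤ b) (hC : 1 ≤ Cm) (hbC : b ≤ Cm * a)
    (hε0 : 0 < ε) (hε1 : ε < 1) :
    a ^ (-ε) * (b - a) + (Cm / (1 - ε)) * a ^ (1 - ε) ≤ (Cm / (1 - ε)) * b ^ (1 - ε) := by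
  have hb : 0 < b := lt_of_lt_of_le ha hab
  have h1ε : 0 < 1 - ε := by linarith
  have hCm0 : 0 < Cm := lt_of_lt_of_le one_pos hC
  have hamgm : b ^ ε * a ^ (1 - ε) ≤ ε * b + (1 - ε) * a :=
    Real.geom_mean_le_arith_mean2_weighted hε0.le h1ε.le hb.le ha.le (by ring)
  have hbb : b ^ ε * b ^ (1 - ε) = b := by
    rw [← Real.rpow_add hb]; norm_num
  have hkey : (1 - ε) * (b - a) ≤ b ^ ε * (b ^ (1 - ε) - a ^ (1 - ε)) := by
    have h : b ^ ε * (b ^ (1 - ε) - a ^ (1 - ε)) = b - b ^ ε * a ^ (1 - ε) := by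
      rw [mul_sub, hbb]
    rw [h]; linarith
  have hbε : 0 < b ^ ε := Real.rpow_pos_of_pos hb ε
  have hbnε : b ^ (-ε) = (b ^ ε)⁻¹ := Real.rpow_neg hb.le ε
  have hkey2 : b ^ (-ε) * (b - a) ≤ (b ^ (1 - ε) - a ^ (1 - ε)) / (1 - ε) := by
    rw [hbnε, div_eq_inv_mul, ← mul_le_mul_iff_right₀ h1ε]
    calc (1-ε) * ((b^ε)⁻¹ * (b-a)) = (b^ε)⁻¹ * ((1-ε)*(b-a)) := by ring
      _ ≤ (b^ε)⁻¹ * (b^ε * (b^(1-ε) - a^(1-ε))) :=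
          mul_le_mul_of_nonneg_left hkey (inv_nonneg.2 hbε.le)
      _ = (1-ε) * ((1-ε)⁻¹ * (b^(1-ε) - a^(1-ε))) := by
          field_simp
  have haε : a ^ (-ε) ≤ Cm * b ^ (-ε) := by
    have h1 : b / Cm ≤ a := by rw [div_le_iff₀ hCm0]; nlinarith
    have h0 : 0 < b / Cm := div_pos hb hCm0
    have h2 : (b/Cm) ^ ε ≤ a ^ ε := Real.rpow_le_rpow h0.le h1 hε0.le
    have h3 : (b/Cm) ^ ε = b^ε / Cm^ε := Real.div_rpow hb.le hCm0.le ε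
    have hCε : Cm ^ ε ≤ Cm := by
      calc Cm^ε ≤ Cm^(1:ℝ) := Real.rpow_le_rpow_of_exponent_le hC hε1.le
        _ = Cm := Real.rpow_one Cm
    have h4 : (a^ε)⁻¹ ≤ ((b/Cm)^ε)⁻¹ := by
      apply inv_anti₀ (Real.rpow_pos_of_pos h0 ε) h2
    have h5 : ((b/Cm)^ε)⁻¹ = Cm^ε * (b^ε)⁻¹ := by
      rw [h3]; field_simp
    have h6 : Cm^ε * (b^ε)⁻¹ ≤ Cm * (b^ε)⁻¹ :=
      mul_le_mul_of_nonneg_right hCε (inv_nonneg.2 hbε.le)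
    rw [Real.rpow_neg ha.le, hbnε]
    exact (h4.trans h5.le).trans h6
  have hba : 0 ≤ b - a := by linarith
  have hfin : a ^ (-ε) * (b - a) ≤ Cm * ((b ^ (1 - ε) - a ^ (1 - ε)) / (1 - ε)) := by
    calc a ^ (-ε) * (b - a) ≤ (Cm * b ^ (-ε)) * (b - a) :=
          mul_le_mul_of_nonneg_right haε hba
      _ = Cm * (b ^ (-ε) * (b - a)) := by ring
      _ ≤ Cm * ((b ^ (1 - ε) - a ^ (1 - ε)) / (1 - ε)) :=
          mul_le_mul_of_nonneg_left hkey2 hCm0.le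
  have heq : Cm * ((b ^ (1 - ε) - a ^ (1 - ε)) / (1 - ε))
      = (Cm / (1-ε)) * b ^ (1-ε) - (Cm / (1-ε)) * a ^ (1-ε) := by
    field_simp
  linarith [heq ▸ hfin]

theorem ennreal_key {a b Cm : ℝ≥0∞} {ε : ℝ} (ha : a ≠ 0) (hb' : b ≠ ∞) (hab : a ≤ b)
    (hC : 1 ≤ Cm) (hC' : Cm ≠ ∞) (hbC : b ≤ Cm * a) (hε0 : 0 < ε) (hε1 : ε < 1) :
    a ^ (-ε) * (b - a) + (Cm * ENNReal.ofReal (1/(1-ε))) * a ^ (1 - ε)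
      ≤ (Cm * ENNReal.ofReal (1/(1-ε))) * b ^ (1 - ε) := by
  have ha' : a ≠ ∞ := fun h => hb' (top_le_iff.1 (h ▸ hab))
  have hb0 : b ≠ 0 := fun h => ha (le_antisymm (h ▸ hab) (zero_le))
  set a' := a.toReal with ha'def
  set b' := b.toReal with hb'def
  set Cm' := Cm.toReal with hC'def
  have hap : 0 < a' := ENNReal.toReal_pos ha ha'
  have hbp : 0 < b' := ENNReal.toReal_pos hb0 hb'
  have habr : a' ≤ b' := ENNReal.toReal_mono hb' hab
  have hCr : 1 ≤ Cm' := by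
    rw [hC'def, ← ENNReal.toReal_one]
    exact ENNReal.toReal_mono hC' hC
  have hbCr : b' ≤ Cm' * a' := by
    rw [hC'def, ha'def, ← ENNReal.toReal_mul]
    exact ENNReal.toReal_mono (ENNReal.mul_ne_top hC' ha') hbC
  have h1ε : 0 < 1 - ε := by linarith
  have key := real_key hap habr hCr hbCr hε0 hε1
  have e1 : a ^ (-ε) = ENNReal.ofReal (a' ^ (-ε)) := by
    rw [← ENNReal.ofReal_rpow_of_pos hap, ENNReal.ofReal_toReal ha']
  have e2 : b - a = ENNReal.ofReal (b' - a') := by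
    rw [ENNReal.ofReal_sub _ hap.le, ENNReal.ofReal_toReal ha', ENNReal.ofReal_toReal hb']
  have e3 : a ^ (1-ε) = ENNReal.ofReal (a' ^ (1-ε)) := by
    rw [← ENNReal.ofReal_rpow_of_pos hap, ENNReal.ofReal_toReal ha']
  have e4 : b ^ (1-ε) = ENNReal.ofReal (b' ^ (1-ε)) := by
    rw [← ENNReal.ofReal_rpow_of_pos hbp, ENNReal.ofReal_toReal hb']
  have e5 : Cm * ENNReal.ofReal (1/(1-ε)) = ENNReal.ofReal (Cm' / (1-ε)) := by
    rw [div_eq_mul_one_div Cm' (1-ε), ENNReal.ofReal_mul (by positivity),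
      ENNReal.ofReal_toReal hC']
  have hba : (0:ℝ) ≤ b' - a' := by linarith
  rw [e1, e2, e3, e4, e5, ← ENNReal.ofReal_mul (by positivity),
    ← ENNReal.ofReal_mul (by positivity), ← ENNReal.ofReal_mul (by positivity),
    ← ENNReal.ofReal_add (mul_nonneg (Real.rpow_nonneg hap.le _) hba) (by positivity)]
  exact ENNReal.ofReal_le_ofReal key

end Stmt11Aux

/-- The uncentered Hardy–Littlewood maximal operator. -/
noncomputable def hlMax {X : Type*} [MeasurableSpace X] (ρ : X → X → ℝ) (μ : Measure X)
    (f : X → ℝ≥0∞) (x : X) : ℝ≥0∞ :=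
  ⨆ (c : X) (r : ℝ) (_ : x ∈ qball ρ c r),
    (μ (qball ρ c r))⁻¹ * ∫⁻ y in qball ρ c r, f y ∂μ

set_option maxHeartbeats 4000000 in
/-- On a space of homogeneous type, for `x₀ ∈ X` and `ε ∈ (0,1)`, the weight
`w := [M(𝟏_{B(x₀,1)})]^ε` is a Muckenhoupt `A₁` weight: there is `C > 0` with
`μ(B)⁻¹ ∫_B w dμ ≤ C w(x)` for every ball `B` and a.e. `x ∈ B`. -/
theorem stmt11 {X : Type*} [MeasurableSpace X] (μ : Measure X) (ρ : X → X → ℝ)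
    (A₀ : ℝ) (Cμ : ℝ≥0∞)
    (hA₀ : 1 ≤ A₀)
    (hρ_nonneg : ∀ x y, 0 ≤ ρ x y)
    (hρ_eq : ∀ x y, ρ x y = 0 ↔ x = y)
    (hρ_symm : ∀ x y, ρ x y = ρ y x)
    (hρ_tri : ∀ x y z, ρ x z ≤ A₀ * (ρ x y + ρ y z))
    (hCμ : 1 ≤ Cμ) (hCμ_lt : Cμ < ∞)
    (hdouble : ∀ (x : X) (r : ℝ), μ (qball ρ x (2 * r)) ≤ Cμ * μ (qball ρ x r))
    (hpos : ∀ (x : X) (r : ℝ), 0 < r → 0 < μ (qball ρ x r))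
    (hfin : ∀ (x : X) (r : ℝ), 0 < r → μ (qball ρ x r) < ∞)
    (x₀ : X) (ε : ℝ) (hε0 : 0 < ε) (hε1 : ε < 1) :
    ∃ C : ℝ≥0∞, 0 < C ∧ C < ∞ ∧ ∀ (c : X) (r : ℝ), 0 < r →
      ∀ᵐ x ∂μ, x ∈ qball ρ c r →
        (μ (qball ρ c r))⁻¹ *
            (∫⁻ y in qball ρ c r,
              (hlMax ρ μ (Set.indicator (qball ρ x₀ 1) fun _ => (1 : ℝ≥0∞)) y) ^ ε ∂μ)
          ≤ C * (hlMax ρ μ (Set.indicator (qball ρ x₀ 1) fun _ => (1 : ℝ≥0∞)) x) ^ ε := by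
  classical
  have hA0 : (0:ℝ) < A₀ := lt_of_lt_of_le one_pos hA₀
  -- choose the doubling exponent k
  obtain ⟨k, hk⟩ : ∃ k : ℕ, 6*A₀^4 < 2^k := pow_unbounded_of_one_lt (6*A₀^4) one_lt_two
  have hA2one : (1:ℝ) ≤ A₀^2 := by simpa using pow_le_pow_left₀ zero_le_one hA₀ 2
  have hA3one : (1:ℝ) ≤ A₀^3 := by simpa using pow_le_pow_left₀ zero_le_one hA₀ 3
  have hA4one : (1:ℝ) ≤ A₀^4 := by simpa using pow_le_pow_left₀ zero_le_one hA₀ 4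
  have hAA2 : A₀ ≤ A₀^2 := by nlinarith
  have hA23 : A₀^2 ≤ A₀^3 := by nlinarith
  have hA34 : A₀^3 ≤ A₀^4 := by nlinarith
  have hk2 : (2:ℝ)^k ≥ 4*A₀^2 := by nlinarith
  have hk3 : (2:ℝ)^k ≥ 6*A₀^3 := by nlinarith
  have hk3' : (2:ℝ)^k ≥ 3*A₀^3 := by nlinarith
  have hk4 : (2:ℝ)^k ≥ 6*A₀^4 := hk.le
  have hk1 : (1:ℝ) ≤ 2^k := by nlinarith
  set K : ℝ≥0∞ := Cμ^k with hKdef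
  have hK1 : 1 ≤ K := by simpa using pow_le_pow_left₀ (zero_le (a := (1:ℝ≥0∞))) hCμ k
  have hKt : K ≠ ∞ := ENNReal.pow_ne_top hCμ_lt.ne
  have hK0 : K ≠ 0 := fun h => by simp [h] at hK1
  -- basic ball lemmas
  have hballm : ∀ (z : X) (r₁ r₂ : ℝ), r₁ ≤ r₂ → qball ρ z r₁ ⊆ qball ρ z r₂ :=
    fun z r₁ r₂ h y hy => lt_of_lt_of_le hy h
  have hdbln : ∀ (z : X) (s : ℝ) (n : ℕ), μ (qball ρ z (2^n * s)) ≤ Cμ^n * μ (qball ρ z s) := by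
    intro z s n
    induction n with
    | zero => simp
    | succ n ih =>
      have h2 : (2:ℝ)^(n+1) * s = 2 * (2^n * s) := by ring
      rw [h2, pow_succ]
      calc μ (qball ρ z (2 * (2^n * s))) ≤ Cμ * μ (qball ρ z (2^n * s)) := hdouble z _
        _ ≤ Cμ * (Cμ^n * μ (qball ρ z s)) := mul_le_mul_right ih _
        _ = Cμ^n * Cμ * μ (qball ρ z s) := by ring
  set f : X → ℝ≥0∞ := Set.indicator (qball ρ x₀ 1) fun _ => (1 : ℝ≥0∞) with hfdef
  set M : X → ℝ≥0∞ := hlMax ρ μ f with hMdef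
  set t : ℝ≥0∞ := ∫⁻ y, f y ∂μ with htdef
  have hf1 : ∀ y, f y ≤ 1 := by
    intro y
    by_cases h : y ∈ qball ρ x₀ 1 <;> simp [hfdef, h]
  have hfsupp : ∀ y, f y ≠ 0 → y ∈ qball ρ x₀ 1 := by
    intro y h
    by_contra hc
    exact h (Set.indicator_of_notMem hc _)
  -- integral facts
  have hIt : ∀ Q : Set X, ∫⁻ y in Q, f y ∂μ ≤ t :=
    fun Q => lintegral_mono' Measure.restrict_le_self le_rfl
  have hIμ : ∀ Q : Set X, ∫⁻ y in Q, f y ∂μ ≤ μ Q := by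
    intro Q
    have := Stmt11Aux.lintegral_restrict_le μ f Q 1 (fun y _ => hf1 y)
    simpa using this
  have hIzero : ∀ Q : Set X, (∀ y ∈ Q, y ∉ qball ρ x₀ 1) → ∫⁻ y in Q, f y ∂μ = 0 := by
    intro Q h
    refine le_antisymm ?_ (zero_le)
    have := Stmt11Aux.lintegral_restrict_le μ f Q 0
      (fun y hy => le_of_eq (Set.indicator_of_notMem (h y hy) _))
    simpa using this
  have hIfull : ∀ Q : Set X, qball ρ x₀ 1 ⊆ Q → ∫⁻ y in Q, f y ∂μ = t :=
    fun Q h => (Stmt11Aux.lintegral_restrict_of_support μ f Q (fun y hy => h (hfsupp y hy))).symm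
  -- sup manipulation
  have hMle : ∀ (V : ℝ≥0∞) (x : X), (∀ z s, x ∈ qball ρ z s →
      (μ (qball ρ z s))⁻¹ * ∫⁻ y in qball ρ z s, f y ∂μ ≤ V) → M x ≤ V := by
    intro V x h
    rw [hMdef]
    simp only [hlMax]
    exact iSup_le fun z => iSup_le fun s => iSup_le fun hx => h z s hx
  have hMge : ∀ (x z : X) (s : ℝ), x ∈ qball ρ z s →
      (μ (qball ρ z s))⁻¹ * ∫⁻ y in qball ρ z s, f y ∂μ ≤ M x := by
    intro x z s hx
    rw [hMdef]
    simp only [hlMax]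
    exact le_iSup_of_le z (le_iSup_of_le s (le_iSup_of_le hx le_rfl))
  have hrpos : ∀ (z : X) (s : ℝ) (x : X), x ∈ qball ρ z s → 0 < s :=
    fun z s x hx => lt_of_le_of_lt (hρ_nonneg z x) hx
  have hM1 : ∀ y, M y ≤ 1 := by
    intro y
    refine hMle 1 y fun z s hy => ?_
    calc (μ (qball ρ z s))⁻¹ * ∫⁻ y in qball ρ z s, f y ∂μ
        ≤ (μ (qball ρ z s))⁻¹ * μ (qball ρ z s) := mul_le_mul_right (hIμ _) _
      _ ≤ 1 := Stmt11Aux.ennreal_inv_mul_self_le_one _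
  -- dispatch the degenerate case t = 0
  rcases eq_or_ne t 0 with ht | ht0
  · refine ⟨1, one_pos, ENNReal.one_lt_top, fun c r hr => ae_of_all _ fun x hx => ?_⟩
    have hM0 : ∀ y, M y = 0 := by
      intro y
      refine le_antisymm (hMle 0 y fun z s hy => ?_) (zero_le)
      have h0 : ∫⁻ y in qball ρ z s, f y ∂μ = 0 :=
        le_antisymm (ht ▸ hIt _) (zero_le)
      rw [h0, mul_zero]
    have hzero : ∫⁻ y in qball ρ c r, (M y)^ε ∂μ = 0 := by
      have : ∀ y, (M y)^ε = (0:ℝ≥0∞) := fun y => by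
        rw [hM0 y, ENNReal.zero_rpow_of_pos hε0]
      calc ∫⁻ y in qball ρ c r, (M y)^ε ∂μ = ∫⁻ _ in qball ρ c r, 0 ∂μ :=
            lintegral_congr fun y => this y
        _ = 0 := lintegral_zero
    rw [hzero, mul_zero]
    exact zero_le
    -- now t ≠ 0
  have htop : t ≠ ∞ := by
    have h1 : t ≤ μ (qball ρ x₀ 1) := by
      rw [htdef, Stmt11Aux.lintegral_restrict_of_support μ f (qball ρ x₀ 1) hfsupp]
      exact hIμ _
    exact (lt_of_le_of_lt h1 (hfin x₀ 1 one_pos)).ne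
  -- the weight comparison function
  set g : X → ℝ≥0∞ := fun y => (μ (qball ρ x₀ (ρ x₀ y + 1)))⁻¹ * t with hgdef
  have hrad : ∀ y : X, (0:ℝ) < ρ x₀ y + 1 := fun y => by
    have := hρ_nonneg x₀ y; linarith
  have hGy0 : ∀ y : X, μ (qball ρ x₀ (ρ x₀ y + 1)) ≠ 0 := fun y => (hpos _ _ (hrad y)).ne'
  have hGyt : ∀ y : X, μ (qball ρ x₀ (ρ x₀ y + 1)) ≠ ∞ := fun y => (hfin _ _ (hrad y)).ne
  have hgM : ∀ y, g y ≤ M y := by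
    intro y
    have hmem : y ∈ qball ρ x₀ (ρ x₀ y + 1) := by
      show ρ x₀ y < ρ x₀ y + 1; linarith
    have hsub : qball ρ x₀ 1 ⊆ qball ρ x₀ (ρ x₀ y + 1) :=
      hballm _ _ _ (by have := hρ_nonneg x₀ y; linarith)
    have h := hMge y x₀ (ρ x₀ y + 1) hmem
    rwa [hIfull _ hsub] at h
  have hg1 : ∀ y, g y ≤ 1 := fun y => (hgM y).trans (hM1 y)
  have hg0 : ∀ y, g y ≠ 0 := fun y =>
    mul_ne_zero (ENNReal.inv_ne_zero.2 (hGyt y)) ht0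
  -- the local neighbourhood N
  set N : Set X := qball ρ x₀ (3*A₀^2) with hNdef
  -- KEY pointwise bound : off N, M ≤ K * g
  have hMKg : ∀ y, y ∉ N → M y ≤ K * g y := by
    intro y hyN
    refine hMle _ y fun z s hy => ?_
    have hs0 : 0 < s := hrpos z s y hy
    by_cases hI0 : ∫⁻ u in qball ρ z s, f u ∂μ = 0
    · rw [hI0, mul_zero]; exact zero_le
    · have hw : ∃ w, w ∈ qball ρ z s ∧ w ∈ qball ρ x₀ 1 := by
        by_contra hc
        push_neg at hc
        exact hI0 (hIzero _ hc)
      obtain ⟨w, hwQ, hwB⟩ := hw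
      have hzw : ρ z w < s := hwQ
      have hzy : ρ z y < s := hy
      have hx0w : ρ x₀ w < 1 := hwB
      have hDy : 3*A₀^2 ≤ ρ x₀ y := not_lt.1 hyN
      have h1 : ρ x₀ y ≤ A₀ * (ρ x₀ w + ρ w y) := hρ_tri _ _ _
      have h2 : ρ w y ≤ A₀ * (ρ z w + ρ z y) := by
        have h := hρ_tri w z y; rwa [hρ_symm w z] at h
      have e1 : A₀ * ρ x₀ w < A₀ * 1 := mul_lt_mul_of_pos_left hx0w hA0
      have e2 : A₀ * ρ w y ≤ A₀ * (A₀ * (ρ z w + ρ z y)) := mul_le_mul_of_nonneg_left h2 hA0.le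
      have e3 : A₀ * (ρ z w + ρ z y) < A₀ * (2*s) :=
        mul_lt_mul_of_pos_left (by linarith) hA0
      have e4 : A₀ * (A₀ * (ρ z w + ρ z y)) ≤ A₀ * (A₀ * (2*s)) :=
        mul_le_mul_of_nonneg_left e3.le hA0.le
      have hstep1 : ρ x₀ y < A₀ + 2*A₀^2*s := by linarith [h1, e1, e2, e4]
      have hs1 : (1:ℝ) ≤ s := by
        by_contra hcon
        push_neg at hcon
        have p : 2*A₀^2*s < 2*A₀^2*1 :=
          mul_lt_mul_of_pos_left hcon (by positivity)
        linarith [hstep1, hDy, hAA2, p]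
      -- inclusion of the reference ball in the blown-up ball
      have hsub' : qball ρ x₀ (ρ x₀ y + 1) ⊆ qball ρ z (2^k * s) := by
        intro u hu
        have hu' : ρ x₀ u < ρ x₀ y + 1 := hu
        have f1 : ρ z u ≤ A₀ * (ρ z x₀ + ρ x₀ u) := hρ_tri _ _ _
        have f2 : ρ z x₀ ≤ A₀ * (ρ z w + ρ w x₀) := hρ_tri _ _ _
        have f2' : ρ w x₀ = ρ x₀ w := hρ_symm _ _
        have faux : ρ z w + ρ w x₀ < s + 1 := by rw [f2']; linarith
        have p1 : A₀ * (ρ z w + ρ w x₀) < A₀ * (s + 1) := mul_lt_mul_of_pos_left faux hA0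
        have p2 : A₀ * 1 ≤ A₀ * s := mul_le_mul_of_nonneg_left hs1 hA0.le
        have f3 : ρ z x₀ < 2*A₀*s := by linarith [f2, p1, p2]
        have p3 : A₀^2 * 1 ≤ A₀^2 * s := mul_le_mul_of_nonneg_left hs1 (by positivity)
        have f4 : ρ x₀ u < 3*A₀^2*s + 1 := by linarith [hu', hstep1, p3, hAA2]
        have p4 : A₀ * s ≤ A₀^2 * s := mul_le_mul_of_nonneg_right hAA2 hs0.le
        have f5 : ρ z x₀ + ρ x₀ u < 6*A₀^2*s := by linarith [f3, f4, p3, p4, hA2one]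
        have p5 : A₀ * (ρ z x₀ + ρ x₀ u) < A₀ * (6*A₀^2*s) := mul_lt_mul_of_pos_left f5 hA0
        have p6 : 6*A₀^3*s ≤ 2^k*s := mul_le_mul_of_nonneg_right hk3 hs0.le
        show ρ z u < 2^k * s
        have f6 : ρ z u < A₀ * (6*A₀^2*s) := lt_of_le_of_lt f1 p5
        have frw : A₀ * (6*A₀^2*s) = 6*A₀^3*s := by ring
        linarith [f6, frw ▸ f6, p6]
      have hμsub : μ (qball ρ x₀ (ρ x₀ y + 1)) ≤ K * μ (qball ρ z s) :=
        (measure_mono hsub').trans (hdbln z s k)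
      have hinv : (μ (qball ρ z s))⁻¹ ≤ K * (μ (qball ρ x₀ (ρ x₀ y + 1)))⁻¹ :=
        Stmt11Aux.inv_le_mul_inv (hGy0 y) (hGyt y) (hpos z s hs0).ne' (hfin z s hs0).ne hμsub
      calc (μ (qball ρ z s))⁻¹ * ∫⁻ u in qball ρ z s, f u ∂μ
          ≤ (μ (qball ρ z s))⁻¹ * t := mul_le_mul_right (hIt _) _
        _ ≤ (K * (μ (qball ρ x₀ (ρ x₀ y + 1)))⁻¹) * t := mul_le_mul_left hinv _
        _ = K * g y := by rw [hgdef, mul_assoc]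
    -- constants for the E2 bound
  have h10pos : (0:ℝ) < 10*A₀^4 := by positivity
  have hNpos : (0:ℝ) < 3*A₀^2 := by positivity
  set G₀ : ℝ≥0∞ := (μ (qball ρ x₀ (10*A₀^4)))⁻¹ * t with hG₀def
  have hG₀0 : G₀ ≠ 0 := mul_ne_zero (ENNReal.inv_ne_zero.2 (hfin x₀ _ h10pos).ne) ht0
  have hG₀t : G₀ ≠ ∞ := ENNReal.mul_ne_top (ENNReal.inv_ne_top.2 (hpos x₀ _ h10pos).ne') htop
  have hμN : μ N ≠ ∞ := (hfin x₀ _ hNpos).ne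
  set C₂ : ℝ≥0∞ := G₀^(-ε) + μ N * t⁻¹ * K with hC₂def
  have hE2 : ∀ (c : X) (r : ℝ), 0 < r → ∀ x ∈ qball ρ c r,
      μ (qball ρ c r ∩ N) ≤ C₂ * (M x)^ε * μ (qball ρ c r) := by
    intro c r hr x hxB
    have hxB' : ρ c x < r := hxB
    have hμB0 : μ (qball ρ c r) ≠ 0 := (hpos c r hr).ne'
    have hμBt : μ (qball ρ c r) ≠ ∞ := (hfin c r hr).ne
    rcases (qball ρ c r ∩ N).eq_empty_or_nonempty with he | ⟨p, hpB, hpN⟩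
    · rw [he, measure_empty]; exact zero_le
    · have hpB' : ρ c p < r := hpB
      have hpN' : ρ x₀ p < 3*A₀^2 := hpN
      by_cases hr1 : r ≤ 3*A₀^2
      · -- small ball : x is near x₀, so M x ≥ G₀
        have t1 : ρ p x ≤ A₀ * (ρ p c + ρ c x) := hρ_tri _ _ _
        have t1' : ρ p c = ρ c p := hρ_symm _ _
        have q1 : ρ p x < 2*A₀*r := by
          have h' : ρ p c + ρ c x < 2*r := by rw [t1']; linarith
          have h'' := mul_lt_mul_of_pos_left h' hA0
          linarith [t1, h'']
        have t2 : ρ x₀ x ≤ A₀ * (ρ x₀ p + ρ p x) := hρ_tri _ _ _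
        have q2 : A₀ * (ρ x₀ p + ρ p x) < A₀ * (3*A₀^2 + 2*A₀*r) :=
          mul_lt_mul_of_pos_left (by linarith) hA0
        have q3 : A₀ * (3*A₀^2 + 2*A₀*r) ≤ A₀ * (3*A₀^2 + 6*A₀^3) := by
          have h' : 2*A₀*r ≤ 2*A₀*(3*A₀^2) := by
            have := mul_le_mul_of_nonneg_left hr1 (show (0:ℝ) ≤ 2*A₀ by positivity)
            linarith [this]
          apply mul_le_mul_of_nonneg_left ?_ hA0.le
          linarith [h']
        have hb1 : ρ x₀ x + 1 ≤ 10*A₀^4 := by linarith [t2, q2, q3, hA4one, hA34]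
        have hsubx : qball ρ x₀ (ρ x₀ x + 1) ⊆ qball ρ x₀ (10*A₀^4) := hballm _ _ _ hb1
        have hgx : G₀ ≤ g x := by
          rw [hG₀def, hgdef]
          exact mul_le_mul_left (ENNReal.inv_le_inv' (measure_mono hsubx)) _
        have hMx : G₀ ≤ M x := hgx.trans (hgM x)
        have h1le : (1:ℝ≥0∞) ≤ G₀^(-ε) * (M x)^ε := by
          have hcan : G₀^(-ε) * G₀^ε = 1 := by
            rw [← ENNReal.rpow_add _ _ hG₀0 hG₀t]
            norm_num
          calc (1:ℝ≥0∞) = G₀^(-ε) * G₀^ε := hcan.symm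
            _ ≤ G₀^(-ε) * (M x)^ε := mul_le_mul_right (ENNReal.rpow_le_rpow hMx hε0.le) _
        calc μ (qball ρ c r ∩ N) ≤ μ (qball ρ c r) := measure_mono inter_subset_left
          _ = 1 * μ (qball ρ c r) := (one_mul _).symm
          _ ≤ G₀^(-ε) * (M x)^ε * μ (qball ρ c r) := mul_le_mul_left h1le _
          _ ≤ C₂ * (M x)^ε * μ (qball ρ c r) :=
              mul_le_mul_left (mul_le_mul_left le_self_add _) _
      · push_neg at hr1
        have hr1' : (1:ℝ) < r := by linarith [hA2one]
        have s1 : ρ c x₀ ≤ A₀ * (ρ c p + ρ p x₀) := hρ_tri _ _ _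
        have s1' : ρ p x₀ = ρ x₀ p := hρ_symm _ _
        have w1 : ρ c x₀ < 2*A₀*r := by
          have h' : ρ c p + ρ p x₀ < 2*r := by rw [s1']; linarith
          have h'' := mul_lt_mul_of_pos_left h' hA0
          linarith [s1, h'']
        have s2 : ρ x₀ x ≤ A₀ * (ρ x₀ c + ρ c x) := hρ_tri _ _ _
        have s2' : ρ x₀ c = ρ c x₀ := hρ_symm _ _
        have w2 : ρ x₀ x < 3*A₀^2*r := by
          have hsum : ρ x₀ c + ρ c x < 2*A₀*r + r := by rw [s2']; linarith
          have h'' := mul_lt_mul_of_pos_left hsum hA0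
          have pa : A₀*r ≤ A₀^2*r := mul_le_mul_of_nonneg_right hAA2 (by linarith)
          linarith [s2, h'', pa]
        have hsub2 : qball ρ x₀ (ρ x₀ x + 1) ⊆ qball ρ c (2^k * r) := by
          intro u hu
          have hu' : ρ x₀ u < ρ x₀ x + 1 := hu
          have v1 : ρ c u ≤ A₀ * (ρ c x₀ + ρ x₀ u) := hρ_tri _ _ _
          have pa : A₀*r ≤ A₀^2*r := mul_le_mul_of_nonneg_right hAA2 (by linarith)
          have pb : (1:ℝ) ≤ A₀^2*r := by
            have h' : A₀^2*1 ≤ A₀^2*r := mul_le_mul_of_nonneg_left hr1'.le (by positivity)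
            linarith [hA2one, h']
          have hsum2 : ρ c x₀ + ρ x₀ u < 6*A₀^2*r := by linarith [hu', w2, pa, pb]
          have v2 := mul_lt_mul_of_pos_left hsum2 hA0
          have v3 : 6*A₀^3*r ≤ 2^k*r := mul_le_mul_of_nonneg_right hk3 (by linarith)
          show ρ c u < 2^k*r
          linarith [v1, v2, v3]
        have hμsub2 : μ (qball ρ x₀ (ρ x₀ x + 1)) ≤ K * μ (qball ρ c r) :=
          (measure_mono hsub2).trans (hdbln c r k)
        have hMxε : M x ≤ (M x)^ε := by
          have h := ENNReal.rpow_le_rpow_of_exponent_ge (hM1 x) hε1.le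
          rwa [ENNReal.rpow_one] at h
        have hKinv : (K * μ (qball ρ c r))⁻¹ ≤ (μ (qball ρ x₀ (ρ x₀ x + 1)))⁻¹ :=
          ENNReal.inv_le_inv' hμsub2
        have e0 : (K * μ (qball ρ c r))⁻¹ = K⁻¹ * (μ (qball ρ c r))⁻¹ :=
          ENNReal.mul_inv (Or.inl hK0) (Or.inl hKt)
        have e1 : ((K * μ (qball ρ c r))⁻¹ * t) * μ (qball ρ c r) = K⁻¹ * t := by
          rw [e0, show K⁻¹ * (μ (qball ρ c r))⁻¹ * t * μ (qball ρ c r)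
            = K⁻¹ * t * ((μ (qball ρ c r))⁻¹ * μ (qball ρ c r)) from by ring,
            ENNReal.inv_mul_cancel hμB0 hμBt, mul_one]
        have hlow : K⁻¹ * t ≤ (M x)^ε * μ (qball ρ c r) := by
          calc K⁻¹ * t = ((K * μ (qball ρ c r))⁻¹ * t) * μ (qball ρ c r) := e1.symm
            _ ≤ ((μ (qball ρ x₀ (ρ x₀ x + 1)))⁻¹ * t) * μ (qball ρ c r) :=
                mul_le_mul_left (mul_le_mul_left hKinv t) _
            _ = g x * μ (qball ρ c r) := by rw [hgdef]
            _ ≤ M x * μ (qball ρ c r) := mul_le_mul_left (hgM x) _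
            _ ≤ (M x)^ε * μ (qball ρ c r) := mul_le_mul_left hMxε _
        calc μ (qball ρ c r ∩ N) ≤ μ N := measure_mono inter_subset_right
          _ = (μ N * t⁻¹ * K) * (K⁻¹ * t) := by
              rw [show (μ N * t⁻¹ * K) * (K⁻¹ * t) = μ N * (t⁻¹ * t) * (K * K⁻¹) from by ring,
                ENNReal.inv_mul_cancel ht0 htop, ENNReal.mul_inv_cancel hK0 hKt,
                mul_one, mul_one]
          _ ≤ (μ N * t⁻¹ * K) * ((M x)^ε * μ (qball ρ c r)) := mul_le_mul_right hlow _
          _ = (μ N * t⁻¹ * K) * (M x)^ε * μ (qball ρ c r) := by ring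
          _ ≤ C₂ * (M x)^ε * μ (qball ρ c r) :=
              mul_le_mul_left (mul_le_mul_left le_add_self _) _
    -- rpow helpers
  have hrpow_ne0 : ∀ (a : ℝ≥0∞), a ≠ 0 → a ≠ ∞ → ∀ p:ℝ, a^p ≠ 0 := by
    intro a h0 ht p h
    rcases ENNReal.rpow_eq_zero_iff.1 h with ⟨h1,_⟩|⟨h1,_⟩
    exacts [h0 h1, ht h1]
  have hrpow_net : ∀ (a : ℝ≥0∞), a ≠ 0 → a ≠ ∞ → ∀ p:ℝ, a^p ≠ ∞ := by
    intro a h0 ht p h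
    rcases ENNReal.rpow_eq_top_iff.1 h with ⟨h1,_⟩|⟨h1,_⟩
    exacts [h0 h1, ht h1]
  -- dyadic balls and their measurable hulls
  set q : ℕ → ℝ≥0∞ := fun j => μ (qball ρ x₀ (2^j)) with hqdef
  have hq0 : ∀ j, q j ≠ 0 := fun j => (hpos x₀ _ (by positivity)).ne'
  have hqt : ∀ j, q j ≠ ∞ := fun j => (hfin x₀ _ (by positivity)).ne
  have hqmono : ∀ j, q j ≤ q (j+1) := fun j =>
    measure_mono (hballm _ _ _ (pow_le_pow_right₀ one_le_two (Nat.le_succ j)))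
  have hqdbl : ∀ j, q (j+1) ≤ Cμ * q j := by
    intro j
    have e : (2:ℝ)^(j+1) = 2 * 2^j := by ring
    rw [hqdef]
    simpa [e] using hdouble x₀ (2^j)
  set m : ℕ → Set X := fun j => ⋂ i, toMeasurable μ (qball ρ x₀ (2^(j+i))) with hmdef
  have hmmeas : ∀ j, MeasurableSet (m j) :=
    fun j => MeasurableSet.iInter fun i => measurableSet_toMeasurable μ _
  have hmsub : ∀ j, qball ρ x₀ (2^j) ⊆ m j := fun j => subset_iInter fun i =>
    (hballm _ _ _ (pow_le_pow_right₀ one_le_two (Nat.le_add_right j i))).trans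
      (subset_toMeasurable μ _)
  have hmmono : ∀ j, m j ⊆ m (j+1) := by
    intro j
    refine subset_iInter fun i => ?_
    have h := iInter_subset (fun i' => toMeasurable μ (qball ρ x₀ (2^(j+i')))) (i+1)
    rw [show j+(i+1) = j+1+i from by omega] at h
    exact h
  have hmμ : ∀ j, μ (m j) = q j := by
    intro j
    refine le_antisymm ?_ (measure_mono (hmsub j))
    calc μ (m j) ≤ μ (toMeasurable μ (qball ρ x₀ (2^(j+0)))) :=
        measure_mono (iInter_subset _ 0)
      _ = q j := by rw [measure_toMeasurable]; norm_num; rfl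
  -- the constants of the core estimate
  set κ : ℝ≥0∞ := Cμ * ENNReal.ofReal (1/(1-ε)) with hκdef
  have hκ1 : 1 ≤ κ := by
    have h2 : (1:ℝ≥0∞) ≤ ENNReal.ofReal (1/(1-ε)) := by
      rw [ENNReal.one_le_ofReal]
      rw [le_div_iff₀ (by linarith)]
      linarith
    calc (1:ℝ≥0∞) = 1 * 1 := (one_mul 1).symm
      _ ≤ Cμ * ENNReal.ofReal (1/(1-ε)) := mul_le_mul' hCμ h2
  have hκt : κ ≠ ∞ := ENNReal.mul_ne_top hCμ_lt.ne ENNReal.ofReal_ne_top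
  set W : ℝ≥0∞ := K^ε * t^ε * κ with hWdef
  -- the core estimate by induction on the dyadic level
  have hcore : ∀ n, (∫⁻ y, (M y)^ε ∂(μ.restrict (m n \ N))) ≤ q 0 + W * (q n)^(1-ε) := by
    intro n
    induction n with
    | zero =>
      have hb : ∀ y ∈ m 0 \ N, (M y)^ε ≤ 1 := by
        intro y _
        calc (M y)^ε ≤ 1^ε := ENNReal.rpow_le_rpow (hM1 y) hε0.le
          _ = 1 := ENNReal.one_rpow ε
      calc ∫⁻ y, (M y)^ε ∂(μ.restrict (m 0 \ N)) ≤ 1 * μ (m 0 \ N) :=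
          Stmt11Aux.lintegral_restrict_le μ _ _ 1 hb
        _ ≤ 1 * μ (m 0) := mul_le_mul_right (measure_mono diff_subset) _
        _ = q 0 := by rw [one_mul, hmμ]
        _ ≤ q 0 + W * (q 0)^(1-ε) := le_self_add
    | succ n ih =>
      have hset : m (n+1) \ N ⊆ (m n \ N) ∪ ((m (n+1) \ m n) \ N) := by
        intro y hy
        by_cases h : y ∈ m n
        · exact Or.inl ⟨h, hy.2⟩
        · exact Or.inr ⟨⟨hy.1, h⟩, hy.2⟩
      have hgb : ∀ y ∈ (m (n+1) \ m n) \ N, (M y)^ε ≤ (K * ((q n)⁻¹ * t))^ε := by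
        intro y hy
        have hyN : y ∉ N := hy.2
        have hyn : y ∉ qball ρ x₀ ((2:ℝ)^n) := fun hmem => hy.1.2 (hmsub n hmem)
        have hD : (2:ℝ)^n ≤ ρ x₀ y := not_lt.1 hyn
        have hsubb : qball ρ x₀ ((2:ℝ)^n) ⊆ qball ρ x₀ (ρ x₀ y + 1) :=
          hballm _ _ _ (by linarith)
        have hqy : q n ≤ μ (qball ρ x₀ (ρ x₀ y + 1)) := measure_mono hsubb
        have hgy : g y ≤ (q n)⁻¹ * t := by
          rw [hgdef]
          exact mul_le_mul_left (ENNReal.inv_le_inv' hqy) _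
        exact ENNReal.rpow_le_rpow ((hMKg y hyN).trans (mul_le_mul_right hgy K)) hε0.le
      have hpiece : ∫⁻ y, (M y)^ε ∂(μ.restrict ((m (n+1) \ m n) \ N))
          ≤ (K * ((q n)⁻¹ * t))^ε * (q (n+1) - q n) := by
        refine (Stmt11Aux.lintegral_restrict_le μ _ _ _ hgb).trans (mul_le_mul_right ?_ _)
        have h1 : μ (((m (n+1) \ m n) \ N)) ≤ μ (m (n+1) \ m n) := measure_mono diff_subset
        have h2 : μ (m (n+1) \ m n) = q (n+1) - q n := by
          rw [measure_diff (hmmono n) (hmmeas n).nullMeasurableSet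
            (by rw [hmμ n]; exact hqt n), hmμ, hmμ]
        exact h1.trans h2.le
      have hrpoweq : (K * ((q n)⁻¹ * t))^ε = K^ε * t^ε * (q n)^(-ε) := by
        rw [ENNReal.mul_rpow_of_nonneg _ _ hε0.le, ENNReal.mul_rpow_of_nonneg _ _ hε0.le,
          ENNReal.inv_rpow, ← ENNReal.rpow_neg]
        ring
      have hKey := Stmt11Aux.ennreal_key (hq0 n) (hqt (n+1)) (hqmono n) hCμ hCμ_lt.ne
        (hqdbl n) hε0 hε1
      rw [← hκdef] at hKey
      calc ∫⁻ y, (M y)^ε ∂(μ.restrict (m (n+1) \ N))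
          ≤ ∫⁻ y, (M y)^ε ∂(μ.restrict ((m n \ N) ∪ ((m (n+1) \ m n) \ N))) :=
            lintegral_mono' (Measure.restrict_mono hset le_rfl) le_rfl
        _ ≤ ∫⁻ y, (M y)^ε ∂(μ.restrict (m n \ N) + μ.restrict ((m (n+1) \ m n) \ N)) :=
            lintegral_mono' (Measure.restrict_union_le _ _) le_rfl
        _ = (∫⁻ y, (M y)^ε ∂(μ.restrict (m n \ N)))
            + ∫⁻ y, (M y)^ε ∂(μ.restrict ((m (n+1) \ m n) \ N)) :=
            lintegral_add_measure _ _ _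
        _ ≤ (q 0 + W * (q n)^(1-ε)) + (K * ((q n)⁻¹ * t))^ε * (q (n+1) - q n) :=
            add_le_add ih hpiece
        _ ≤ q 0 + W * (q (n+1))^(1-ε) := by
            rw [hrpoweq]
            have h2 : K^ε*t^ε*(q n)^(-ε) * (q (n+1) - q n) + W * (q n)^(1-ε)
                ≤ W * (q (n+1))^(1-ε) := by
              rw [hWdef]
              calc K^ε*t^ε*(q n)^(-ε) * (q (n+1) - q n) + K^ε*t^ε*κ * (q n)^(1-ε)
                  = K^ε*t^ε * ((q n)^(-ε) * (q (n+1) - q n) + κ * (q n)^(1-ε)) := by ring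
                _ ≤ K^ε*t^ε * (κ * (q (n+1))^(1-ε)) := mul_le_mul_right hKey _
                _ = K^ε*t^ε*κ * (q (n+1))^(1-ε) := by ring
            calc q 0 + W * (q n)^(1-ε) + K^ε*t^ε*(q n)^(-ε) * (q (n+1) - q n)
                = q 0 + (K^ε*t^ε*(q n)^(-ε) * (q (n+1) - q n) + W * (q n)^(1-ε)) := by ring
              _ ≤ q 0 + W * (q (n+1))^(1-ε) := add_le_add_right h2 _
    -- constants for the off-N estimate
  set y₀ : ℝ≥0∞ := K⁻¹ * (t^ε * (q 0)^(1-ε)) with hy₀def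
  have hy₀0 : y₀ ≠ 0 :=
    mul_ne_zero (ENNReal.inv_ne_zero.2 hKt)
      (mul_ne_zero (hrpow_ne0 t ht0 htop ε) (hrpow_ne0 (q 0) (hq0 0) (hqt 0) _))
  have hy₀t : y₀ ≠ ∞ :=
    ENNReal.mul_ne_top (ENNReal.inv_ne_top.2 hK0)
      (ENNReal.mul_ne_top (hrpow_net t ht0 htop ε) (hrpow_net (q 0) (hq0 0) (hqt 0) _))
  set C₁ : ℝ≥0∞ := K*K + (q 0 * y₀⁻¹ + K*K*κ*Cμ) with hC₁def
  have hE1 : ∀ (c : X) (r : ℝ), 0 < r → ∀ x ∈ qball ρ c r,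
      ∫⁻ y, (M y)^ε ∂(μ.restrict (qball ρ c r \ N))
        ≤ C₁ * (M x)^ε * μ (qball ρ c r) := by
    intro c r hr x hxB
    have hxB' : ρ c x < r := hxB
    have hμB0 : μ (qball ρ c r) ≠ 0 := (hpos c r hr).ne'
    have hμBt : μ (qball ρ c r) ≠ ∞ := (hfin c r hr).ne
    by_cases hcase : 2*A₀^2*r ≤ ρ x₀ c + 1 ∨ r ≤ 1
    · -- comparable case : g is essentially constant on the ball
      have hcomp : ∀ u v : X, ρ c u < r → ρ c v < r →
          ρ x₀ u + 1 ≤ 2^k * (ρ x₀ v + 1) := by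
        intro u v hu hv
        have t1 : ρ x₀ u ≤ A₀ * (ρ x₀ c + ρ c u) := hρ_tri _ _ _
        have t2 : ρ x₀ c ≤ A₀ * (ρ x₀ v + ρ v c) := hρ_tri _ _ _
        have t2' : ρ v c = ρ c v := hρ_symm _ _
        have hvnn : 0 ≤ ρ x₀ v := hρ_nonneg _ _
        have hunn : 0 ≤ ρ x₀ u := hρ_nonneg _ _
        have hcnn : 0 ≤ ρ x₀ c := hρ_nonneg _ _
        have p1 : A₀ * ρ c u ≤ A₀ * r := mul_le_mul_of_nonneg_left hu.le hA0.le
        have p2 : A₀ * ρ c v ≤ A₀ * r := mul_le_mul_of_nonneg_left hv.le hA0.le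
        have t2'' : ρ x₀ c ≤ A₀ * ρ x₀ v + A₀ * r := by
          calc ρ x₀ c ≤ A₀ * (ρ x₀ v + ρ v c) := t2
            _ = A₀ * ρ x₀ v + A₀ * ρ c v := by rw [t2']; ring
            _ ≤ A₀ * ρ x₀ v + A₀ * r := by linarith [p2]
        have g6 : 4*A₀^2*(ρ x₀ v+1) ≤ 2^k*(ρ x₀ v+1) :=
          mul_le_mul_of_nonneg_right hk2 (by linarith)
        rcases hcase with h | h
        · -- 2 A₀² r ≤ d + 1
          have pr : (0:ℝ) ≤ A₀ * r := by positivity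
          have pm : (0:ℝ) ≤ (A₀*r) * (2*A₀ - 2) := mul_nonneg pr (by linarith)
          have c1 : 2*A₀^2*r ≤ A₀*(ρ x₀ v) + A₀*r + 1 := by linarith [t2'', h]
          have g1 : A₀ * r ≤ A₀ * (ρ x₀ v) + 1 := by linarith [c1, pm]
          have g2 : ρ x₀ c ≤ 2*A₀*(ρ x₀ v) + 1 := by linarith [t2'', g1]
          have g3 : A₀ * ρ x₀ c ≤ A₀ * (2*A₀*(ρ x₀ v) + 1) :=
            mul_le_mul_of_nonneg_left g2 hA0.le
          have g4 : (0:ℝ) ≤ (A₀^2 - A₀) * ρ x₀ v := mul_nonneg (by linarith) hvnn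
          have g5 : ρ x₀ u + 1 ≤ 4*A₀^2*(ρ x₀ v) + 4*A₀^2 := by linarith [t1, p1, g1, g3, g4, hA2one, hAA2]
          linarith [g5, g6]
        · -- r ≤ 1
          have p1' : A₀ * ρ c u ≤ A₀ * 1 := mul_le_mul_of_nonneg_left (hu.le.trans h) hA0.le
          have p2' : A₀ * ρ c v ≤ A₀ * 1 := mul_le_mul_of_nonneg_left (hv.le.trans h) hA0.le
          have d1 : ρ x₀ c ≤ A₀ * (ρ x₀ v) + A₀ := by
            calc ρ x₀ c ≤ A₀ * (ρ x₀ v + ρ v c) := t2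
              _ = A₀ * ρ x₀ v + A₀ * ρ c v := by rw [t2']; ring
              _ ≤ A₀ * ρ x₀ v + A₀ := by linarith [p2']
          have g3 : A₀ * ρ x₀ c ≤ A₀ * (A₀ * (ρ x₀ v) + A₀) :=
            mul_le_mul_of_nonneg_left d1 hA0.le
          have g4 : (0:ℝ) ≤ A₀^2 * ρ x₀ v := by positivity
          have g5 : ρ x₀ u + 1 ≤ 4*A₀^2*(ρ x₀ v) + 4*A₀^2 := by
            linarith [t1, p1', g3, g4, hA2one, hAA2]
          linarith [g5, g6]
      have hgc : ∀ y, ρ c y < r → g y ≤ K * g x := by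
        intro y hy
        have h1 : qball ρ x₀ (ρ x₀ x + 1) ⊆ qball ρ x₀ (2^k * (ρ x₀ y + 1)) :=
          hballm _ _ _ (hcomp x y hxB' hy)
        have h2 : μ (qball ρ x₀ (ρ x₀ x + 1)) ≤ K * μ (qball ρ x₀ (ρ x₀ y + 1)) :=
          (measure_mono h1).trans (hdbln x₀ _ k)
        have h3 : (μ (qball ρ x₀ (ρ x₀ y + 1)))⁻¹ ≤ K * (μ (qball ρ x₀ (ρ x₀ x + 1)))⁻¹ :=
          Stmt11Aux.inv_le_mul_inv (hGy0 x) (hGyt x) (hGy0 y) (hGyt y) h2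
        calc g y = (μ (qball ρ x₀ (ρ x₀ y + 1)))⁻¹ * t := by rw [hgdef]
          _ ≤ (K * (μ (qball ρ x₀ (ρ x₀ x+1)))⁻¹) * t := mul_le_mul_left h3 _
          _ = K * g x := by rw [hgdef, mul_assoc]
      have hbd : ∀ y ∈ qball ρ c r \ N, (M y)^ε ≤ (K * (K * g x))^ε := by
        intro y hy
        exact ENNReal.rpow_le_rpow
          ((hMKg y hy.2).trans (mul_le_mul_right (hgc y hy.1) K)) hε0.le
      have hKK : (K*(K*g x))^ε ≤ K*K*(M x)^ε := by
        have e : (K*(K*g x))^ε = (K*K)^ε * (g x)^ε := by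
          rw [← mul_assoc, ENNReal.mul_rpow_of_nonneg _ _ hε0.le]
        rw [e]
        have h1 : (K*K)^ε ≤ K*K := by
          have h2 : (1:ℝ≥0∞) ≤ K*K := by
            calc (1:ℝ≥0∞) = 1*1 := (one_mul 1).symm
              _ ≤ K*K := mul_le_mul' hK1 hK1
          have h3 := ENNReal.rpow_le_rpow_of_exponent_le h2 hε1.le
          rwa [ENNReal.rpow_one] at h3
        exact mul_le_mul' h1 (ENNReal.rpow_le_rpow (hgM x) hε0.le)
      calc ∫⁻ y, (M y)^ε ∂(μ.restrict (qball ρ c r \ N))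
          ≤ (K*(K*g x))^ε * μ (qball ρ c r \ N) :=
            Stmt11Aux.lintegral_restrict_le μ _ _ _ hbd
        _ ≤ (K*K*(M x)^ε) * μ (qball ρ c r) := mul_le_mul' hKK (measure_mono diff_subset)
        _ = K*K * (M x)^ε * μ (qball ρ c r) := by ring
        _ ≤ C₁ * (M x)^ε * μ (qball ρ c r) :=
            mul_le_mul_left (mul_le_mul_left le_self_add _) _
    · -- large ball roughly centred at x₀
      push_neg at hcase
      obtain ⟨hd1, hr1⟩ := hcase
      set R : ℝ := 4*A₀^3*r with hRdef
      have hR1 : (1:ℝ) ≤ R := by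
        have h' : A₀^3*1 ≤ A₀^3*r := mul_le_mul_of_nonneg_left hr1.le (by positivity)
        have : (1:ℝ) ≤ A₀^3*r := by linarith [hA3one, h']
        rw [hRdef]; linarith
      have hRpos : (0:ℝ) < R := by linarith
      have hsubBR : qball ρ c r ⊆ qball ρ x₀ R := by
        intro y hy
        have hy' : ρ c y < r := hy
        have t1 : ρ x₀ y ≤ A₀ * (ρ x₀ c + ρ c y) := hρ_tri _ _ _
        show ρ x₀ y < R
        have p := mul_lt_mul_of_pos_left
          (show ρ x₀ c + ρ c y < 2*A₀^2*r + r from by linarith) hA0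
        have pa : A₀*r ≤ A₀^3*r := mul_le_mul_of_nonneg_right (by linarith) (by linarith)
        have pb : (0:ℝ) < A₀^3*r := by positivity
        rw [hRdef]
        linarith [t1, p, pa, pb]
      have hDxR : ρ x₀ x + 1 ≤ R := by
        have t1 : ρ x₀ x ≤ A₀ * (ρ x₀ c + ρ c x) := hρ_tri _ _ _
        have p := mul_lt_mul_of_pos_left
          (show ρ x₀ c + ρ c x < 2*A₀^2*r + r from by linarith) hA0
        have pa : A₀*r ≤ A₀^3*r := mul_le_mul_of_nonneg_right (by linarith) (by linarith)
        have pb : (1:ℝ) < A₀^3*r := by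
          have h' := mul_lt_mul_of_pos_left hr1 (show (0:ℝ) < A₀^3 by positivity)
          have h'' : A₀^3*1 = A₀^3 := mul_one _
          linarith [hA3one, h', h'']
        rw [hRdef]
        linarith [t1, p, pa, pb]
      have hμRB : μ (qball ρ x₀ R) ≤ K * μ (qball ρ c r) := by
        have hsub : qball ρ x₀ R ⊆ qball ρ c (2^k * r) := by
          intro u hu
          have hu' : ρ x₀ u < R := hu
          have t1 : ρ c u ≤ A₀ * (ρ c x₀ + ρ x₀ u) := hρ_tri _ _ _
          have t1' : ρ c x₀ = ρ x₀ c := hρ_symm _ _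
          have p := mul_lt_mul_of_pos_left
            (show ρ c x₀ + ρ x₀ u < 2*A₀^2*r + 4*A₀^3*r from by
              rw [t1']; rw [hRdef] at hu'; linarith) hA0
          have pa : A₀^3*r ≤ A₀^4*r := mul_le_mul_of_nonneg_right hA34 (by linarith)
          have pc : 6*A₀^4*r ≤ 2^k*r := mul_le_mul_of_nonneg_right hk4 (by linarith)
          show ρ c u < 2^k * r
          linarith [t1, p, pa, pc]
        exact (measure_mono hsub).trans (hdbln c r k)
      obtain ⟨n₀, hn₀⟩ : ∃ n:ℕ, R < 2^n := pow_unbounded_of_one_lt R one_lt_two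
      have hex : ∃ n:ℕ, R ≤ 2^n := ⟨n₀, hn₀.le⟩
      set J := Nat.find hex with hJdef
      have hJ1 : R ≤ 2^J := Nat.find_spec hex
      have hJ2 : (2:ℝ)^J ≤ 2*R := by
        rcases Nat.eq_zero_or_pos J with h0 | hJpos
        · rw [h0]; norm_num; linarith
        · have hlt : J - 1 < J := Nat.sub_lt hJpos one_pos
          have hmin := Nat.find_min hex hlt
          push_neg at hmin
          have e : (2:ℝ)^J = 2 * 2^(J-1) := by
            conv_lhs => rw [show J = (J-1)+1 from (Nat.succ_pred_eq_of_pos hJpos).symm]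
            rw [pow_succ]; ring
          rw [e]; linarith
      have hsubmJ : qball ρ c r \ N ⊆ m J \ N := fun y hy =>
        ⟨hmsub J (hballm _ _ _ hJ1 (hsubBR hy.1)), hy.2⟩
      have hIJ : ∫⁻ y, (M y)^ε ∂(μ.restrict (qball ρ c r \ N))
          ≤ q 0 + W * (q J)^(1-ε) :=
        (lintegral_mono' (Measure.restrict_mono hsubmJ le_rfl) le_rfl).trans (hcore J)
      have hqJ : q J ≤ Cμ * μ (qball ρ x₀ R) :=
        (measure_mono (hballm _ _ _ hJ2)).trans (hdouble x₀ R)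
      have hμR0 : μ (qball ρ x₀ R) ≠ 0 := (hpos x₀ R hRpos).ne'
      have hμRt : μ (qball ρ x₀ R) ≠ ∞ := (hfin x₀ R hRpos).ne
      have hgxR : (μ (qball ρ x₀ R))⁻¹ * t ≤ g x := by
        rw [hgdef]
        exact mul_le_mul_left
          (ENNReal.inv_le_inv' (measure_mono (hballm _ _ _ hDxR))) _
      have hYlow : K⁻¹ * (t^ε * (μ (qball ρ x₀ R))^(1-ε))
          ≤ (M x)^ε * μ (qball ρ c r) := by
        have h1 : ((μ (qball ρ x₀ R))⁻¹ * t)^ε ≤ (M x)^ε :=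
          ENNReal.rpow_le_rpow (hgxR.trans (hgM x)) hε0.le
        have h2 : ((μ (qball ρ x₀ R))⁻¹*t)^ε = t^ε * ((μ (qball ρ x₀ R))^ε)⁻¹ := by
          rw [ENNReal.mul_rpow_of_nonneg _ _ hε0.le, ENNReal.inv_rpow]
          ring
        have h3 : K⁻¹ * μ (qball ρ x₀ R) ≤ μ (qball ρ c r) := by
          calc K⁻¹ * μ (qball ρ x₀ R) ≤ K⁻¹ * (K * μ (qball ρ c r)) :=
              mul_le_mul_right hμRB _
            _ = (K⁻¹ * K) * μ (qball ρ c r) := by ring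
            _ = μ (qball ρ c r) := by rw [ENNReal.inv_mul_cancel hK0 hKt, one_mul]
        have h4 : t^ε * (μ (qball ρ x₀ R))^(1-ε)
            = (t^ε * ((μ (qball ρ x₀ R))^ε)⁻¹) * μ (qball ρ x₀ R) := by
          rw [show (1:ℝ) - ε = -ε + 1 from by ring,
            ENNReal.rpow_add _ _ hμR0 hμRt, ENNReal.rpow_neg, ENNReal.rpow_one]
          ring
        calc K⁻¹ * (t^ε * (μ (qball ρ x₀ R))^(1-ε))
            = (t^ε * ((μ (qball ρ x₀ R))^ε)⁻¹) * (K⁻¹ * μ (qball ρ x₀ R)) := by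
              rw [h4]; ring
          _ ≤ (M x)^ε * μ (qball ρ c r) := mul_le_mul' (h2 ▸ h1) h3
      have hq0bound : q 0 ≤ (q 0 * y₀⁻¹) * ((M x)^ε * μ (qball ρ c r)) := by
        have hq0R : q 0 ≤ μ (qball ρ x₀ R) :=
          measure_mono (hballm _ _ _ (by rw [pow_zero]; exact hR1))
        have h5 : y₀ ≤ K⁻¹ * (t^ε * (μ (qball ρ x₀ R))^(1-ε)) := by
          rw [hy₀def]
          exact mul_le_mul_right
            (mul_le_mul_right (ENNReal.rpow_le_rpow hq0R (by linarith)) _) _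
        have h6 : y₀ ≤ (M x)^ε * μ (qball ρ c r) := h5.trans hYlow
        have e9 : q 0 = (q 0 * y₀⁻¹) * y₀ := by
          rw [mul_assoc, ENNReal.inv_mul_cancel hy₀0 hy₀t, mul_one]
        calc q 0 = (q 0 * y₀⁻¹) * y₀ := e9
          _ ≤ (q 0 * y₀⁻¹) * ((M x)^ε * μ (qball ρ c r)) := mul_le_mul_right h6 _
      have hWbound : W * (q J)^(1-ε)
          ≤ (K*K*κ*Cμ) * ((M x)^ε * μ (qball ρ c r)) := by
        have h7 : (q J)^(1-ε) ≤ Cμ * (μ (qball ρ x₀ R))^(1-ε) := by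
          calc (q J)^(1-ε) ≤ (Cμ * μ (qball ρ x₀ R))^(1-ε) :=
              ENNReal.rpow_le_rpow hqJ (by linarith)
            _ = Cμ^(1-ε) * (μ (qball ρ x₀ R))^(1-ε) :=
              ENNReal.mul_rpow_of_nonneg _ _ (by linarith)
            _ ≤ Cμ * (μ (qball ρ x₀ R))^(1-ε) := by
                refine mul_le_mul_left ?_ _
                have h := ENNReal.rpow_le_rpow_of_exponent_le hCμ
                  (show (1:ℝ)-ε ≤ 1 from by linarith)
                rwa [ENNReal.rpow_one] at h
        have h8 : K^ε ≤ K := by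
          have h := ENNReal.rpow_le_rpow_of_exponent_le hK1 hε1.le
          rwa [ENNReal.rpow_one] at h
        calc W * (q J)^(1-ε) ≤ W * (Cμ * (μ (qball ρ x₀ R))^(1-ε)) :=
            mul_le_mul_right h7 _
          _ = (K^ε * κ * Cμ) * (t^ε * (μ (qball ρ x₀ R))^(1-ε)) := by
              rw [hWdef]; ring
          _ ≤ (K * κ * Cμ) * (t^ε * (μ (qball ρ x₀ R))^(1-ε)) :=
              mul_le_mul_left (mul_le_mul_left (mul_le_mul_left h8 _) _) _
          _ = (K*K*κ*Cμ) * (K⁻¹ * (t^ε * (μ (qball ρ x₀ R))^(1-ε))) := by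
              rw [show K*K*κ*Cμ * (K⁻¹ * (t^ε * (μ (qball ρ x₀ R))^(1-ε)))
                = (K * K⁻¹) * (K*κ*Cμ * (t^ε * (μ (qball ρ x₀ R))^(1-ε))) from by ring,
                ENNReal.mul_inv_cancel hK0 hKt, one_mul]
          _ ≤ (K*K*κ*Cμ) * ((M x)^ε * μ (qball ρ c r)) := mul_le_mul_right hYlow _
      calc ∫⁻ y, (M y)^ε ∂(μ.restrict (qball ρ c r \ N)) ≤ q 0 + W * (q J)^(1-ε) := hIJ
        _ ≤ (q 0 * y₀⁻¹) * ((M x)^ε * μ (qball ρ c r))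
            + (K*K*κ*Cμ) * ((M x)^ε * μ (qball ρ c r)) := add_le_add hq0bound hWbound
        _ = (q 0 * y₀⁻¹ + K*K*κ*Cμ) * (M x)^ε * μ (qball ρ c r) := by ring
        _ ≤ C₁ * (M x)^ε * μ (qball ρ c r) :=
            mul_le_mul_left (mul_le_mul_left le_add_self _) _
  -- final constant and conclusion
  set C : ℝ≥0∞ := C₁ + C₂ with hCdef
  have hCpos : 0 < C := by
    have h1 : (1:ℝ≥0∞) ≤ K*K := by
      calc (1:ℝ≥0∞) = 1*1 := (one_mul 1).symm
        _ ≤ K*K := mul_le_mul' hK1 hK1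
    have h2 : K*K ≤ C := le_trans le_self_add le_self_add
    exact lt_of_lt_of_le zero_lt_one (h1.trans h2)
  have hCtop : C < ∞ := by
    rw [hCdef, hC₁def, hC₂def, lt_top_iff_ne_top]
    have hG₀ε : G₀^(-ε) ≠ ∞ := hrpow_net G₀ hG₀0 hG₀t _
    refine ENNReal.add_ne_top.2 ⟨ENNReal.add_ne_top.2 ⟨ENNReal.mul_ne_top hKt hKt,
      ENNReal.add_ne_top.2 ⟨ENNReal.mul_ne_top (hqt 0) (ENNReal.inv_ne_top.2 hy₀0), ?_⟩⟩,
      ENNReal.add_ne_top.2 ⟨hG₀ε, ?_⟩⟩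
    · exact ENNReal.mul_ne_top (ENNReal.mul_ne_top (ENNReal.mul_ne_top hKt hKt) hκt) hCμ_lt.ne
    · exact ENNReal.mul_ne_top (ENNReal.mul_ne_top hμN (ENNReal.inv_ne_top.2 ht0)) hKt
  refine ⟨C, hCpos, hCtop, fun c r hr => ae_of_all _ fun x hx => ?_⟩
  have hμB0 : μ (qball ρ c r) ≠ 0 := (hpos c r hr).ne'
  have hμBt : μ (qball ρ c r) ≠ ∞ := (hfin c r hr).ne
  have hsplit : ∫⁻ y in qball ρ c r, (M y)^ε ∂μ
      ≤ (∫⁻ y, (M y)^ε ∂(μ.restrict (qball ρ c r \ N)))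
        + ∫⁻ y, (M y)^ε ∂(μ.restrict (qball ρ c r ∩ N)) := by
    have h1 : μ.restrict (qball ρ c r)
        ≤ μ.restrict (qball ρ c r \ N) + μ.restrict (qball ρ c r ∩ N) := by
      have e : qball ρ c r = (qball ρ c r \ N) ∪ (qball ρ c r ∩ N) :=
        (diff_union_inter _ _).symm
      calc μ.restrict (qball ρ c r)
          = μ.restrict ((qball ρ c r \ N) ∪ (qball ρ c r ∩ N)) := by rw [← e]
        _ ≤ _ := Measure.restrict_union_le _ _
    calc ∫⁻ y in qball ρ c r, (M y)^ε ∂μ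
        ≤ ∫⁻ y, (M y)^ε ∂(μ.restrict (qball ρ c r \ N)
            + μ.restrict (qball ρ c r ∩ N)) := lintegral_mono' h1 le_rfl
      _ = _ := lintegral_add_measure _ _ _
  have hNpart : ∫⁻ y, (M y)^ε ∂(μ.restrict (qball ρ c r ∩ N))
      ≤ C₂ * (M x)^ε * μ (qball ρ c r) := by
    have hb : ∀ y ∈ qball ρ c r ∩ N, (M y)^ε ≤ 1 := by
      intro y _
      calc (M y)^ε ≤ 1^ε := ENNReal.rpow_le_rpow (hM1 y) hε0.le
        _ = 1 := ENNReal.one_rpow ε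
    calc ∫⁻ y, (M y)^ε ∂(μ.restrict (qball ρ c r ∩ N))
        ≤ 1 * μ (qball ρ c r ∩ N) := Stmt11Aux.lintegral_restrict_le μ _ _ 1 hb
      _ = μ (qball ρ c r ∩ N) := one_mul _
      _ ≤ C₂ * (M x)^ε * μ (qball ρ c r) := hE2 c r hr x hx
  have htot : ∫⁻ y in qball ρ c r, (M y)^ε ∂μ
      ≤ (C₁ + C₂) * (M x)^ε * μ (qball ρ c r) := by
    calc ∫⁻ y in qball ρ c r, (M y)^ε ∂μ ≤ _ := hsplit
      _ ≤ C₁ * (M x)^ε * μ (qball ρ c r) + C₂ * (M x)^ε * μ (qball ρ c r) :=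
          add_le_add (hE1 c r hr x hx) hNpart
      _ = (C₁ + C₂) * (M x)^ε * μ (qball ρ c r) := by ring
  calc (μ (qball ρ c r))⁻¹ * ∫⁻ y in qball ρ c r, (M y)^ε ∂μ
      ≤ (μ (qball ρ c r))⁻¹ * ((C₁ + C₂) * (M x)^ε * μ (qball ρ c r)) :=
        mul_le_mul_right htot _
    _ = (C₁ + C₂) * (M x)^ε * ((μ (qball ρ c r))⁻¹ * μ (qball ρ c r)) := by ring
    _ = C * (M x)^ε := by rw [ENNReal.inv_mul_cancel hμB0 hμBt, mul_one, hCdef]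
end
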